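/- arXiv:2206.03047 — 4 statements merged into one kernel-verified Lean document; each statement's English description precedes it below -/
import Mathlib

section
/- μ_0 is the empty word, μ_1 = l, and for every n ≥ 2 one has μ_n = (μ_{n−1}μ_{n−2})^*, where w^* denotes the word w with every letter l replaced by r and every letter r replaced by l; moreover, for every n ≥ 4, μ_n = μ_{n−2} μ_{n−3} μ_{n−3} μ_{n−4}. -/
/-- A `k`-Fibonacci move on states of the Tower of Hanoi-Fibonacci with `n` disks.
Disks are numbered `1,…,n`; disk `k` corresponds to index `i : Fin n` with `(i : ℕ) + 1 = k`.
Pegs are `Fin 3` (`0 = A`, `1 = B`, `2 = C`). -/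
def FibMove (n k : ℕ) (s s' : Fin n → Fin 3) : Prop :=
  1 ≤ k ∧ k ≤ n ∧
  ∃ X Y Z : Fin 3, X ≠ Y ∧ Y ≠ Z ∧ X ≠ Z ∧
    (∀ i : Fin n, (i : ℕ) + 1 = k → s i = X) ∧
    (∀ i : Fin n, (i : ℕ) + 1 < k → s i ≠ X) ∧
    (∀ i : Fin n, (i : ℕ) + 1 < k → s i = Y) ∧
    (∀ i : Fin n, ((i : ℕ) + 1 = k ∨ (i : ℕ) + 2 = k) → s' i = Z) ∧
    (∀ i : Fin n, (i : ℕ) + 1 ≠ k → (i : ℕ) + 2 ≠ k → s' i = s i)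

/-- `s 0, s 1, …, s m` is a solution of length `m` of the Tower of Hanoi-Fibonacci
with `n` disks: it starts with all disks on peg `A = 0`, ends with all disks on
peg `C = 2`, and each step is a Fibonacci move. -/
def IsSolution (n m : ℕ) (s : ℕ → (Fin n → Fin 3)) : Prop :=
  (s 0 = fun _ => 0) ∧ (s m = fun _ => 2) ∧ ∀ i < m, ∃ k, FibMove n k (s i) (s (i + 1))

set_option synthInstance.maxSize 400 in
instance (n k : ℕ) (s s' : Fin n → Fin 3) : Decidable (FibMove n k s s') := by
  unfold FibMove; infer_instance

/-- The word `μ_n ∈ {l, r}^{F n}` recording the directions of the successive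
`1`-Fibonacci moves (moves of disk `1` alone) in a solution `s` of length
`F (n+2) - 1` of the Tower of Hanoi-Fibonacci with `n` disks.  The letter `r`
(coded by `true`) means that disk `1` moves from `A` to `B`, from `B` to `C`
or from `C` to `A` (i.e. its peg increases by `1` modulo `3`); the letter `l`
is coded by `false`. -/
def muWord (n : ℕ) (s : ℕ → (Fin n → Fin 3)) : List Bool :=
  ((List.range (Nat.fib (n + 2) - 1)).filter
      (fun i => decide (FibMove n 1 (s i) (s (i + 1))))).map
    (fun i => if h : 0 < n then decide (s (i + 1) ⟨0, h⟩ = s i ⟨0, h⟩ + 1) else true)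


namespace HanoiFib

/-- The third peg. -/
def third (a b : Fin 3) : Fin 3 := -(a+b)

lemma third_ne_left {a b : Fin 3} (h : a ≠ b) : third a b ≠ a := by revert h; revert a b; decide
lemma third_ne_right {a b : Fin 3} (h : a ≠ b) : third a b ≠ b := by revert h; revert a b; decide
lemma eq_third {a b c : Fin 3} (h1 : a ≠ b) (h2 : c ≠ a) (h3 : c ≠ b) : c = third a b := by
  revert h1 h2 h3; revert a b c; decide
lemma third_cases {a b c : Fin 3} (h1 : a ≠ b) (h2 : b ≠ c) (h3 : a ≠ c) (r : Fin 3) :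
    r = a ∨ r = b ∨ r = c := by revert h1 h2 h3; revert a b c r; decide

/-- Minimal number of moves to bring all disks to peg `r`. -/
def phi : (n : ℕ) → (Fin n → Fin 3) → Fin 3 → ℕ
  | 0, _, _ => 0
  | n+1, s, r =>
    if s (Fin.last n) = r then phi n (Fin.init s) r
    else min (phi n (Fin.init s) (third (s (Fin.last n)) r) + Nat.fib (n+1))
             (phi n (Fin.init s) r + 1 + Nat.fib (n+2))

lemma phi_snoc (n : ℕ) (t : Fin n → Fin 3) (x r : Fin 3) :
    phi (n+1) (Fin.snoc t x) r =
      if x = r then phi n t r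
      else min (phi n t (third x r) + Nat.fib (n+1)) (phi n t r + 1 + Nat.fib (n+2)) := by
  simp [phi, Fin.snoc_last, Fin.init_snoc]

lemma const_eq_snoc (n : ℕ) (p : Fin 3) :
    (fun _ : Fin (n+1) => p) = Fin.snoc (fun _ : Fin n => p) p := by
  funext j
  refine Fin.lastCases ?_ (fun i => ?_) j
  · rw [Fin.snoc_last]
  · rw [Fin.snoc_castSucc]

lemma phi_const (n : ℕ) (p r : Fin 3) :
    phi n (fun _ => p) r = if p = r then 0 else Nat.fib (n+2) - 1 := by
  induction n generalizing r with
  | zero => simp [phi]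
  | succ n ih =>
    rw [const_eq_snoc, phi_snoc, ih, ih]
    by_cases h : p = r
    · simp [h]
    · rw [if_neg h, if_neg h, if_neg h, if_neg (fun hh => third_ne_left h (hh ▸ rfl) : ¬ p = third p r)]
      have h1 : Nat.fib (n+1+2) = Nat.fib (n+1) + Nat.fib (n+2) := Nat.fib_add_two
      have h2 : Nat.fib (n+2) = Nat.fib n + Nat.fib (n+1) := Nat.fib_add_two
      have h3 : 0 < Nat.fib (n+1) := Nat.fib_pos.2 (by omega)
      omega

end HanoiFib

namespace HanoiFib

lemma fibMove_unchanged {n k : ℕ} {s s' : Fin n → Fin 3} (h : FibMove n k s s')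
    (j : Fin n) (h1 : (j : ℕ) + 1 ≠ k) (h2 : (j : ℕ) + 2 ≠ k) : s' j = s j := by
  obtain ⟨-, -, X, Y, Z, -, -, -, -, -, -, -, hu⟩ := h
  exact hu j h1 h2

lemma fibMove_one_iff {n : ℕ} (hn : 0 < n) {s s' : Fin n → Fin 3} :
    FibMove n 1 s s' ↔ (s' ⟨0, hn⟩ ≠ s ⟨0, hn⟩ ∧ ∀ j : Fin n, (j : ℕ) ≠ 0 → s' j = s j) := by
  constructor
  · rintro ⟨-, -, X, Y, Z, hXY, hYZ, hXZ, hX, -, -, hZ, hu⟩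
    have h0 : s ⟨0, hn⟩ = X := hX _ rfl
    have h0' : s' ⟨0, hn⟩ = Z := hZ _ (Or.inl rfl)
    refine ⟨by rw [h0, h0']; exact fun hh => hXZ hh.symm, fun j hj => hu j (by omega) (by omega)⟩
  · rintro ⟨hne, hu⟩
    refine ⟨le_refl 1, hn, s ⟨0, hn⟩, third (s ⟨0, hn⟩) (s' ⟨0, hn⟩), s' ⟨0, hn⟩,
      (third_ne_left (fun hh => hne hh.symm)).symm, third_ne_right (fun hh => hne hh.symm),
      fun hh => hne hh.symm, ?_, ?_, ?_, ?_, ?_⟩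
    · intro i hi
      have : i = ⟨0, hn⟩ := Fin.ext (by simp only [Fin.val_mk]; omega)
      rw [this]
    · intro i hi; omega
    · intro i hi; omega
    · rintro i (hi | hi)
      · have : i = ⟨0, hn⟩ := Fin.ext (by simp only [Fin.val_mk]; omega)
        rw [this]
      · omega
    · intro i hi _; exact hu i (by omega)

lemma fibMove_init {n k : ℕ} {s s' : Fin (n+1) → Fin 3} (h : FibMove (n+1) k s s')
    (hk : k ≤ n) : FibMove n k (Fin.init s) (Fin.init s') := by
  obtain ⟨h1, -, X, Y, Z, hXY, hYZ, hXZ, hX, hnX, hY, hZ, hu⟩ := h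
  refine ⟨h1, hk, X, Y, Z, hXY, hYZ, hXZ, ?_, ?_, ?_, ?_, ?_⟩
  · intro i hi; exact hX i.castSucc (by simpa using hi)
  · intro i hi; exact hnX i.castSucc (by simpa using hi)
  · intro i hi; exact hY i.castSucc (by simpa using hi)
  · rintro i (hi | hi)
    · exact hZ i.castSucc (Or.inl (by simpa using hi))
    · exact hZ i.castSucc (Or.inr (by simpa using hi))
  · intro i hi1 hi2; exact hu i.castSucc (by simpa using hi1) (by simpa using hi2)

lemma fibMove_top {n : ℕ} {s s' : Fin (n+2) → Fin 3} (h : FibMove (n+2) (n+2) s s') :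
    ∃ X Y Z : Fin 3, X ≠ Y ∧ Y ≠ Z ∧ X ≠ Z ∧
      s = Fin.snoc (fun _ => Y) X ∧
      s' = Fin.snoc (Fin.snoc (fun _ => Y) Z) Z := by
  obtain ⟨-, -, X, Y, Z, hXY, hYZ, hXZ, hX, hnX, hY, hZ, hu⟩ := h
  refine ⟨X, Y, Z, hXY, hYZ, hXZ, ?_, ?_⟩
  · funext j
    refine Fin.lastCases ?_ (fun i => ?_) j
    · rw [Fin.snoc_last]; exact hX _ (by simp)
    · rw [Fin.snoc_castSucc]; exact hY _ (by simp only [Fin.coe_castSucc]; omega)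
  · funext j
    refine Fin.lastCases ?_ (fun i => ?_) j
    · rw [Fin.snoc_last]; exact hZ _ (Or.inl (by simp))
    · rw [Fin.snoc_castSucc]
      refine Fin.lastCases ?_ (fun i' => ?_) i
      · rw [Fin.snoc_last]; exact hZ _ (Or.inr (by simp))
      · rw [Fin.snoc_castSucc]
        rw [hu _ (by simp only [Fin.coe_castSucc]; omega) (by simp only [Fin.coe_castSucc]; omega)]
        exact hY _ (by simp only [Fin.coe_castSucc]; omega)

lemma fibMove_map {n k : ℕ} {s s' : Fin n → Fin 3} (f : Fin 3 → Fin 3)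
    (hf : Function.Injective f) (h : FibMove n k s s') :
    FibMove n k (fun j => f (s j)) (fun j => f (s' j)) := by
  obtain ⟨h1, h2, X, Y, Z, hXY, hYZ, hXZ, hX, hnX, hY, hZ, hu⟩ := h
  refine ⟨h1, h2, f X, f Y, f Z, fun hh => hXY (hf hh), fun hh => hYZ (hf hh),
    fun hh => hXZ (hf hh), fun i hi => congrArg f (hX i hi), fun i hi hh => hnX i hi (hf hh),
    fun i hi => congrArg f (hY i hi), fun i hi => congrArg f (hZ i hi),
    fun i h1 h2 => congrArg f (hu i h1 h2)⟩

end HanoiFib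

namespace HanoiFib

lemma phi_move : ∀ {n k : ℕ} {s s' : Fin n → Fin 3}, FibMove n k s s' →
    ∀ r, phi n s r ≤ phi n s' r + 1 := by
  intro n
  induction n with
  | zero => intro k s s' h r; obtain ⟨h1, h2, -⟩ := h; omega
  | succ n ih =>
    intro k s s' h r
    by_cases hk : k = n + 1
    · subst hk
      clear ih
      cases n with
      | zero =>
        have h1 : phi (0+1) s r ≤ 1 := by
          simp only [phi]
          split
          · omega
          · have e1 : Nat.fib (0+1) = 1 := rfl
            have e2 : Nat.fib (0+2) = 1 := rfl
            omega
        omega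
      | succ m =>
        obtain ⟨X, Y, Z, hXY, hYZ, hXZ, hs, hs'⟩ := fibMove_top h
        rw [hs, hs']
        have eYX : Y ≠ X := Ne.symm hXY
        have eZX : Z ≠ X := Ne.symm hXZ
        have eZY : Z ≠ Y := Ne.symm hYZ
        have tXY : third X Y = Z := (eq_third hXY eZX eZY).symm
        have tXZ : third X Z = Y := (eq_third hXZ eYX hYZ).symm
        have tZX : third Z X = Y := (eq_third eZX hYZ eYX).symm
        have tZY : third Z Y = X := (eq_third eZY hXZ hXY).symm
        have f1 : Nat.fib (m+3) = Nat.fib (m+1) + Nat.fib (m+2) := Nat.fib_add_two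
        have f2 : Nat.fib (m+2) = Nat.fib m + Nat.fib (m+1) := Nat.fib_add_two
        have f3 : 0 < Nat.fib (m+1) := Nat.fib_pos.2 (by omega)
        have f4 : 0 < Nat.fib (m+2) := Nat.fib_pos.2 (by omega)
        rcases third_cases hXY hYZ hXZ r with hr | hr | hr <;> subst hr
        · simp [phi_snoc, phi_const, tZX, tZY, eYX, eZX, eZY, hXY, hYZ, hXZ,
            show m+1+1 = m+2 from rfl, show m+1+2 = m+3 from rfl]
          omega
        · simp [phi_snoc, phi_const, tXY, tZY, tZX, eYX, eZX, eZY, hXY, hYZ, hXZ,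
            show m+1+1 = m+2 from rfl, show m+1+2 = m+3 from rfl]
          omega
        · simp [phi_snoc, phi_const, tXZ, eYX, eZX, eZY, hXY, hYZ, hXZ,
            show m+1+1 = m+2 from rfl, show m+1+2 = m+3 from rfl]
          omega
    · have hk' : k ≤ n := by obtain ⟨h1, h2, -⟩ := h; omega
      have hlast : s' (Fin.last n) = s (Fin.last n) :=
        fibMove_unchanged h _ (by simp; omega) (by simp; omega)
      have ih1 := ih (fibMove_init h hk') r
      have ih2 := ih (fibMove_init h hk') (third (s (Fin.last n)) r)
      simp only [phi, hlast]
      split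
      · exact ih1
      · omega

end HanoiFib

namespace HanoiFib

def GenSol (n : ℕ) (p q : Fin 3) (m : ℕ) (s : ℕ → (Fin n → Fin 3)) : Prop :=
  (s 0 = fun _ => p) ∧ (s m = fun _ => q) ∧ ∀ i < m, ∃ k, FibMove n k (s i) (s (i + 1))

lemma phi_le_len {n : ℕ} {r : Fin 3} : ∀ {L : ℕ} {u : ℕ → (Fin n → Fin 3)},
    (∀ i < L, ∃ k, FibMove n k (u i) (u (i+1))) → u L = (fun _ => r) →
    phi n (u 0) r ≤ L := by
  intro L
  induction L with
  | zero => intro u _ he; rw [he, phi_const]; simp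
  | succ L ih =>
    intro u hmv he
    obtain ⟨k, hm⟩ := hmv 0 (by omega)
    have h1 := phi_move hm r
    have h2 : phi n (u (0+1)) r ≤ L := by
      simpa using ih (u := fun i => u (i+1)) (fun i hi => hmv (i+1) (by omega)) he
    omega

lemma phi_exact {n : ℕ} {r : Fin 3} {L : ℕ} {u : ℕ → (Fin n → Fin 3)}
    (hmv : ∀ i < L, ∃ k, FibMove n k (u i) (u (i+1))) (he : u L = (fun _ => r))
    (hphi : phi n (u 0) r = L) : ∀ j ≤ L, phi n (u j) r = L - j := by
  have upper : ∀ j ≤ L, phi n (u j) r ≤ L - j := by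
    intro j hj
    have := phi_le_len (u := fun i => u (j+i)) (L := L - j)
      (fun i hi => hmv (j+i) (by omega)) (by show u (j + (L-j)) = _; rw [show j+(L-j) = L by omega, he])
    simpa using this
  have lower : ∀ j ≤ L, phi n (u 0) r ≤ j + phi n (u j) r := by
    intro j
    induction j with
    | zero => simp
    | succ j ihj =>
      intro hj
      obtain ⟨k, hm⟩ := hmv j (by omega)
      have := phi_move hm r
      have := ihj (by omega)
      omega
  intro j hj
  have h1 := upper j hj
  have h2 := lower j hj
  omega

/-- Lower bound for phi of the state (1..n on Y, n+1, n+2 on Z), target r ≠ Z. -/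
lemma shape2_lb {m : ℕ} {Y Z r : Fin 3} (hZr : Z ≠ r) :
    Nat.fib (m+3) - 1 ≤ phi (m+2) (Fin.snoc (Fin.snoc (fun _ => Y) Z) Z) r := by
  have f1 : Nat.fib (m+3) = Nat.fib (m+1) + Nat.fib (m+2) := Nat.fib_add_two
  have f2 : Nat.fib (m+2) = Nat.fib m + Nat.fib (m+1) := Nat.fib_add_two
  have f3 : 0 < Nat.fib (m+1) := Nat.fib_pos.2 (by omega)
  have htZ : third Z r ≠ Z := third_ne_left hZr
  rw [phi_snoc, if_neg hZr, phi_snoc, phi_snoc, if_neg (fun hh => htZ hh.symm), if_neg hZr]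
  simp only [show m+1+1 = m+2 from rfl, show m+1+2 = m+3 from rfl]
  omega

/-- Exact value for the state (1..n on Y, n+1, n+2 on r), target r. -/
lemma shape2_eq {m : ℕ} {Y r : Fin 3} (hYr : Y ≠ r) :
    phi (m+2) (Fin.snoc (Fin.snoc (fun _ => Y) r) r) r = Nat.fib (m+2) - 1 := by
  rw [phi_snoc, if_pos rfl, phi_snoc, if_pos rfl, phi_const, if_neg hYr]

end HanoiFib

namespace HanoiFib

lemma decomp {n : ℕ} {p q : Fin 3} (hpq : p ≠ q) {s : ℕ → (Fin (n+2) → Fin 3)}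
    (hs : GenSol (n+2) p q (Nat.fib (n+4) - 1) s) :
    (∀ i ≤ Nat.fib (n+3) - 1, s i (Fin.last (n+1)) = p) ∧
    (∀ i < Nat.fib (n+3) - 1, ∃ k, k ≤ n+1 ∧ FibMove (n+2) k (s i) (s (i+1))) ∧
    GenSol (n+1) p (third p q) (Nat.fib (n+3) - 1)
      (fun i => Fin.init (s (min i (Nat.fib (n+3) - 1)))) ∧
    s (Nat.fib (n+3) - 1 + 1) = Fin.snoc (Fin.snoc (fun _ => third p q) q) q ∧
    (∀ j < Nat.fib (n+2) - 1, ∃ k, k ≤ n ∧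
      FibMove (n+2) k (s (Nat.fib (n+3) - 1 + 1 + j)) (s (Nat.fib (n+3) - 1 + 1 + j + 1))) ∧
    (∀ j ≤ Nat.fib (n+2) - 1, s (Nat.fib (n+3) - 1 + 1 + j) (Fin.last (n+1)) = q ∧
        s (Nat.fib (n+3) - 1 + 1 + j) ((Fin.last n).castSucc) = q) ∧
    GenSol n (third p q) q (Nat.fib (n+2) - 1)
      (fun j => Fin.init (Fin.init (s (min (Nat.fib (n+3) - 1 + 1 + j) (Nat.fib (n+4) - 1))))) := by
  obtain ⟨hs0, hsM, hsmv⟩ := hs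
  have f4 : Nat.fib (n+4) = Nat.fib (n+2) + Nat.fib (n+3) := Nat.fib_add_two
  have f3 : Nat.fib (n+3) = Nat.fib (n+1) + Nat.fib (n+2) := Nat.fib_add_two
  have p2 : 0 < Nat.fib (n+2) := Nat.fib_pos.2 (by omega)
  have p1 : 0 < Nat.fib (n+1) := Nat.fib_pos.2 (by omega)
  have flt : Nat.fib (n+2) < Nat.fib (n+3) := by
    have := Nat.fib_lt_fib_succ (n := n+2) (by omega)
    simpa [show n+2+1 = n+3 from rfl] using this
  set M := Nat.fib (n+4) - 1 with hMdef
  have hex : ∃ i, i < M ∧ s (i+1) (Fin.last (n+1)) ≠ s i (Fin.last (n+1)) := by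
    by_contra hc
    push_neg at hc
    have hconst : ∀ i ≤ M, s i (Fin.last (n+1)) = p := by
      intro i
      induction i with
      | zero => intro _; rw [hs0]
      | succ i ihi => intro hi; rw [hc i (by omega), ihi (by omega)]
    have h1 := hconst M le_rfl
    rw [hsM] at h1
    exact hpq h1.symm
  set t := Nat.find hex with htdef
  obtain ⟨htM, htch⟩ : t < M ∧ s (t+1) (Fin.last (n+1)) ≠ s t (Fin.last (n+1)) := Nat.find_spec hex
  have htmin : ∀ i < t, s (i+1) (Fin.last (n+1)) = s i (Fin.last (n+1)) := by
    intro i hi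
    have := Nat.find_min hex hi
    push_neg at this
    exact this (by omega)
  have hpre : ∀ i ≤ t, s i (Fin.last (n+1)) = p := by
    intro i
    induction i with
    | zero => intro _; rw [hs0]
    | succ i ihi => intro hi; rw [htmin i (by omega), ihi (by omega)]
  obtain ⟨k, hkmv⟩ := hsmv t htM
  have hkn : k = n+2 := by
    by_contra hk
    have hk2 : k ≤ n+1 := by have := hkmv.2.1; omega
    exact htch (fibMove_unchanged hkmv _ (by simp only [Fin.val_last]; omega)
      (by simp only [Fin.val_last]; omega))
  rw [hkn] at hkmv
  obtain ⟨X, Y, Z, hXY, hYZ, hXZ, hst, hst1⟩ := fibMove_top hkmv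
  have hXp : X = p := by
    have h1 := hpre t le_rfl
    rw [hst] at h1
    simpa [Fin.snoc_last] using h1
  rw [hXp] at hst hXY hXZ
  clear hXp
  -- prefix moves are small
  have hprem : ∀ i < t, ∃ k, k ≤ n+1 ∧ FibMove (n+2) k (s i) (s (i+1)) := by
    intro i hi
    obtain ⟨k', hm'⟩ := hsmv i (by omega)
    refine ⟨k', ?_, hm'⟩
    by_contra hk'
    have hkk : k' = n+2 := by have := hm'.2.1; omega
    rw [hkk] at hm'
    obtain ⟨X', Y', Z', hXY', hYZ', hXZ', hs1', hs2'⟩ := fibMove_top hm'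
    have hc1 : s (i+1) (Fin.last (n+1)) = s i (Fin.last (n+1)) := htmin i hi
    rw [hs1', hs2'] at hc1
    simp only [Fin.snoc_last] at hc1
    exact hXZ' hc1.symm
  -- prefix restricted is a solution
  have hgpre : GenSol (n+1) p Y t (fun i => Fin.init (s (min i t))) := by
    refine ⟨?_, ?_, ?_⟩
    · show Fin.init (s (min 0 t)) = _
      rw [Nat.zero_min, hs0]
      rfl
    · show Fin.init (s (min t t)) = _
      rw [Nat.min_self, hst, Fin.init_snoc]
    · intro i hi
      show ∃ k, FibMove (n+1) k (Fin.init (s (min i t))) (Fin.init (s (min (i+1) t)))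
      obtain ⟨k', hk', hm'⟩ := hprem i hi
      rw [show min i t = i by omega, show min (i+1) t = i+1 by omega]
      exact ⟨k', fibMove_init hm' hk'⟩
  have hpY : p ≠ Y := hXY
  have hTlb : Nat.fib (n+3) - 1 ≤ t := by
    have h1 := phi_le_len (n := n+1) (r := Y) (u := fun i => Fin.init (s (min i t)))
      hgpre.2.2 hgpre.2.1
    have h2 : Fin.init (s (min 0 t)) = (fun _ : Fin (n+1) => p) := hgpre.1
    change phi (n+1) (Fin.init (s (min 0 t))) Y ≤ t at h1
    rw [h2, phi_const, if_neg hpY] at h1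
    exact h1
  have hsufmv : ∀ j < M - (t+1), ∃ k, FibMove (n+2) k (s (t+1+j)) (s (t+1+j+1)) :=
    fun j hj => hsmv (t+1+j) (by omega)
  have hsufend : s (t+1+(M-(t+1))) = (fun _ => q) := by
    rw [show t+1+(M-(t+1)) = M by omega, hsM]
  have hlen : phi (n+2) (s (t+1)) q ≤ M - (t+1) :=
    phi_le_len (u := fun j => s (t+1+j)) hsufmv hsufend
  have hZq : Z = q := by
    by_contra hZq
    have h1 : Nat.fib (n+3) - 1 ≤ phi (n+2) (s (t+1)) q := by
      rw [hst1]; exact shape2_lb (m := n) hZq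
    omega
  rw [hZq] at hst1 hYZ hXZ
  clear hZq
  have hYw : Y = third p q := eq_third hpq (Ne.symm hXY) hYZ
  have hphi1 : phi (n+2) (s (t+1)) q = Nat.fib (n+2) - 1 := by
    rw [hst1]; exact shape2_eq (m := n) hYZ
  have htT : t = Nat.fib (n+3) - 1 := by omega
  have hLL : M - (t+1) = Nat.fib (n+2) - 1 := by omega
  -- phi is exact along the suffix
  have hend2 : s (t+1+(Nat.fib (n+2)-1)) = (fun _ : Fin (n+2) => q) := by
    rw [show t+1+(Nat.fib (n+2)-1) = M by omega, hsM]
  have hphi0 : phi (n+2) (s (t+1+0)) q = Nat.fib (n+2)-1 := by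
    rw [show t+1+0 = t+1 from rfl]; exact hphi1
  have hpe0 := phi_exact (u := fun j => s (t+1+j)) (L := Nat.fib (n+2)-1)
    (fun j hj => hsmv (t+1+j) (by omega)) hend2 hphi0
  have hpe : ∀ j ≤ Nat.fib (n+2) - 1, phi (n+2) (s (t+1+j)) q = (Nat.fib (n+2) - 1) - j :=
    fun j hj => hpe0 j hj
  clear hpe0
  -- one suffix step keeps the two largest disks on q
  have hstep : ∀ j, j < Nat.fib (n+2) - 1 →
      (s (t+1+j) (Fin.last (n+1)) = q ∧ s (t+1+j) ((Fin.last n).castSucc) = q) →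
      ∃ k, k ≤ n ∧ FibMove (n+2) k (s (t+1+j)) (s (t+1+j+1)) := by
    intro j hj hQ
    obtain ⟨k', hm'⟩ := hsmv (t+1+j) (by omega)
    have hk'2 : k' ≤ n+2 := hm'.2.1
    refine ⟨k', ?_, hm'⟩
    by_contra hk'
    rcases (show k' = n+1 ∨ k' = n+2 by omega) with hkk | hkk
    · -- an (n+1)-move: phi would not decrease
      rw [hkk] at hm'
      cases n with
      | zero =>
        have he2 : Nat.fib (0+2) = 1 := rfl
        omega
      | succ n' =>
        have hm'' : FibMove (n'+1+1) (n'+1+1) (Fin.init (s (t+1+j))) (Fin.init (s (t+1+j+1))) :=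
          fibMove_init hm' (le_refl _)
        obtain ⟨X', Y', Z', hXY', hYZ', hXZ', hs1', hs2'⟩ := fibMove_top hm''
        have hX'q : X' = q := by
          have h1 : Fin.init (s (t+1+j)) (Fin.last (n'+1)) = X' := by
            rw [hs1', Fin.snoc_last]
          rw [← h1]
          exact hQ.2
        have hZ'q : Z' ≠ q := by rw [← hX'q]; exact fun hh => hXZ' hh.symm
        have hlast : s (t+1+j+1) (Fin.last (n'+1+1)) = q := by
          rw [fibMove_unchanged hm' _ (by simp only [Fin.val_last]; omega)
            (by simp only [Fin.val_last]; omega)]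
          exact hQ.1
        have hafter : Nat.fib (n'+3) - 1 ≤ phi (n'+1+2) (s (t+1+j+1)) q := by
          rw [← Fin.snoc_init_self (s (t+1+j+1))]
          rw [hlast, phi_snoc, if_pos rfl, hs2']
          exact shape2_lb hZ'q
        have h1 := hpe (j+1) (by omega)
        rw [show t+1+(j+1) = t+1+j+1 from rfl] at h1
        have e1 : Nat.fib (n'+3) = Nat.fib (n'+1+2) := rfl
        have h2b : 2 ≤ Nat.fib (n'+1+2) := by
          have := Nat.fib_mono (show 3 ≤ n'+1+2 by omega)
          simpa [show Nat.fib 3 = 2 from rfl] using this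
        omega
    · -- an (n+2)-move is impossible
      rw [hkk] at hm'
      obtain ⟨-, -, X', Y', Z', -, -, -, hX', hnX', -, -, -⟩ := hm'
      have h1 : s (t+1+j) (Fin.last (n+1)) = X' := hX' _ (by simp only [Fin.val_last])
      have h2 : s (t+1+j) ((Fin.last n).castSucc) ≠ X' :=
        hnX' _ (by simp only [Fin.coe_castSucc, Fin.val_last]; omega)
      rw [hQ.2, ← hQ.1, h1] at h2
      exact h2 rfl
  have hQ : ∀ j ≤ Nat.fib (n+2) - 1,
      s (t+1+j) (Fin.last (n+1)) = q ∧ s (t+1+j) ((Fin.last n).castSucc) = q := by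
    intro j
    induction j with
    | zero =>
      intro _
      rw [show t+1+0 = t+1 from rfl, hst1]
      constructor
      · rw [Fin.snoc_last]
      · rw [Fin.snoc_castSucc, Fin.snoc_last]
    | succ j ihj =>
      intro hj
      obtain ⟨k', hk', hm'⟩ := hstep j (by omega) (ihj (by omega))
      rw [show t+1+(j+1) = t+1+j+1 from rfl]
      constructor
      · rw [fibMove_unchanged hm' _ (by simp only [Fin.val_last]; omega)
          (by simp only [Fin.val_last]; omega)]
        exact (ihj (by omega)).1
      · rw [fibMove_unchanged hm' _ (by simp only [Fin.coe_castSucc, Fin.val_last]; omega)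
          (by simp only [Fin.coe_castSucc, Fin.val_last]; omega)]
        exact (ihj (by omega)).2
  have hsmall : ∀ j < Nat.fib (n+2) - 1, ∃ k, k ≤ n ∧
      FibMove (n+2) k (s (t+1+j)) (s (t+1+j+1)) :=
    fun j hj => hstep j hj (hQ j (by omega))
  have hgsuf : GenSol n Y q (Nat.fib (n+2) - 1)
      (fun j => Fin.init (Fin.init (s (min (t+1+j) M)))) := by
    refine ⟨?_, ?_, ?_⟩
    · show Fin.init (Fin.init (s (min (t+1+0) M))) = _
      rw [show min (t+1+0) M = t+1 by omega, hst1, Fin.init_snoc, Fin.init_snoc]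
    · show Fin.init (Fin.init (s (min (t+1+(Nat.fib (n+2)-1)) M))) = _
      rw [show min (t+1+(Nat.fib (n+2)-1)) M = M by omega, hsM]
      rfl
    · intro j hjL
      show ∃ k, FibMove n k (Fin.init (Fin.init (s (min (t+1+j) M))))
        (Fin.init (Fin.init (s (min (t+1+(j+1)) M))))
      obtain ⟨k', hk', hm'⟩ := hsmall j hjL
      rw [show min (t+1+j) M = t+1+j by omega, show min (t+1+(j+1)) M = t+1+j+1 by omega]
      exact ⟨k', fibMove_init (fibMove_init hm' (by omega)) (by omega)⟩
  rw [htT] at hpre hprem hgpre hst1 hsmall hQ hgsuf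
  rw [hYw] at hgpre hst1 hgsuf
  rw [hMdef] at hgsuf
  exact ⟨hpre, hprem, hgpre, hst1, hsmall, hQ, hgsuf⟩

end HanoiFib

namespace HanoiFib

lemma uniq : ∀ (N : ℕ) (p q : Fin 3), p ≠ q → ∀ (s s' : ℕ → (Fin N → Fin 3)),
    GenSol N p q (Nat.fib (N+2)-1) s → GenSol N p q (Nat.fib (N+2)-1) s' →
    ∀ i ≤ Nat.fib (N+2)-1, s i = s' i := by
  intro N
  induction N using Nat.strong_induction_on with
  | _ N ih =>
    rcases N with _ | N
    · intro p q hpq s s' hs hs' i hi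
      have h0 : Nat.fib (0+2) = 1 := rfl
      have : i = 0 := by omega
      rw [this, hs.1, hs'.1]
    rcases N with _ | n
    · intro p q hpq s s' hs hs' i hi
      have h0 : Nat.fib (0+1+2) = 2 := rfl
      have : i = 0 ∨ i = Nat.fib (0+1+2) - 1 := by omega
      rcases this with h | h <;> rw [h]
      · rw [hs.1, hs'.1]
      · rw [hs.2.1, hs'.2.1]
    intro p q hpq s s' hs hs' i hi
    have e1 : Nat.fib (n+1+1+2) = Nat.fib (n+4) := rfl
    have e2 : Nat.fib (n+1+2) = Nat.fib (n+3) := rfl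
    have f4 : Nat.fib (n+4) = Nat.fib (n+2) + Nat.fib (n+3) := Nat.fib_add_two
    have f3 : Nat.fib (n+3) = Nat.fib (n+1) + Nat.fib (n+2) := Nat.fib_add_two
    have p2 : 0 < Nat.fib (n+2) := Nat.fib_pos.2 (by omega)
    have p3 : 0 < Nat.fib (n+3) := Nat.fib_pos.2 (by omega)
    obtain ⟨ha, hb, hc, hd, he, hf, hg⟩ := decomp hpq hs
    obtain ⟨ha', hb', hc', hd', he', hf', hg'⟩ := decomp hpq hs'
    have hpw : p ≠ third p q := Ne.symm (third_ne_left hpq)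
    have hwq : third p q ≠ q := third_ne_right hpq
    have hpreeq := ih (n+1) (by omega) p (third p q) hpw _ _ hc hc'
    have hsufeq := ih n (by omega) (third p q) q hwq _ _ hg hg'
    rcases le_or_gt i (Nat.fib (n+3)-1) with hiT | hiT
    · have h1 : Fin.init (s (min i (Nat.fib (n+3)-1))) =
          Fin.init (s' (min i (Nat.fib (n+3)-1))) := hpreeq i (by omega)
      rw [show min i (Nat.fib (n+3)-1) = i by omega] at h1
      have h2 : s i (Fin.last (n+1)) = s' i (Fin.last (n+1)) := by
        rw [ha i hiT, ha' i hiT]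
      rw [← Fin.snoc_init_self (s i), ← Fin.snoc_init_self (s' i), h1, h2]
    · set j := i - (Nat.fib (n+3) - 1 + 1) with hjdef
      have hij : i = Nat.fib (n+3)-1+1+j := by omega
      have hjL : j ≤ Nat.fib (n+2)-1 := by omega
      have h1 : Fin.init (Fin.init (s (min (Nat.fib (n+3)-1+1+j) (Nat.fib (n+4)-1)))) =
          Fin.init (Fin.init (s' (min (Nat.fib (n+3)-1+1+j) (Nat.fib (n+4)-1)))) :=
        hsufeq j hjL
      rw [show min (Nat.fib (n+3)-1+1+j) (Nat.fib (n+4)-1) = Nat.fib (n+3)-1+1+j by omega,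
        ← hij] at h1
      have h2 := hf j hjL
      have h2' := hf' j hjL
      rw [← hij] at h2 h2'
      rw [← Fin.snoc_init_self (s i), ← Fin.snoc_init_self (s' i), h2.1, h2'.1]
      rw [← Fin.snoc_init_self (Fin.init (s i)), ← Fin.snoc_init_self (Fin.init (s' i))]
      rw [show Fin.init (s i) (Fin.last n) = s i ((Fin.last n).castSucc) from rfl,
        show Fin.init (s' i) (Fin.last n) = s' i ((Fin.last n).castSucc) from rfl,
        h2.2, h2'.2, h1]

end HanoiFib

namespace HanoiFib

def wordOf (n m : ℕ) (s : ℕ → (Fin n → Fin 3)) : List Bool :=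
  ((List.range m).filter (fun i => decide (FibMove n 1 (s i) (s (i + 1))))).map
    (fun i => if h : 0 < n then decide (s (i + 1) ⟨0, h⟩ = s i ⟨0, h⟩ + 1) else true)

lemma muWord_eq (n : ℕ) (s : ℕ → (Fin n → Fin 3)) :
    muWord n s = wordOf n (Nat.fib (n+2)-1) s := rfl

lemma sub3_inj (c : Fin 3) : Function.Injective (fun x : Fin 3 => c - x) :=
  fun a b h => by revert h; revert a b c; decide

lemma flip_letter : ∀ (c x y : Fin 3), y ≠ x →
    ((decide (c - y = c - x + 1)) = ! decide (y = x + 1)) := by decide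

lemma wordOf_congr {n m : ℕ} {s s' : ℕ → Fin n → Fin 3} (h : ∀ i ≤ m, s i = s' i) :
    wordOf n m s = wordOf n m s' := by
  unfold wordOf
  have hpred : ∀ i ∈ List.range m,
      (decide (FibMove n 1 (s i) (s (i+1))) : Bool) = decide (FibMove n 1 (s' i) (s' (i+1))) := by
    intro i hi
    rw [List.mem_range] at hi
    simp only [h i (by omega), h (i+1) (by omega)]
  rw [List.filter_congr hpred]
  apply List.map_congr_left
  intro a ha
  have ha' : a < m := List.mem_range.1 (List.mem_of_mem_filter ha)
  simp only [h a (by omega), h (a+1) (by omega)]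

lemma wordOf_add {n : ℕ} (a b : ℕ) {s : ℕ → Fin n → Fin 3} :
    wordOf n (a+b) s = wordOf n a s ++ wordOf n b (fun i => s (a+i)) := by
  unfold wordOf
  rw [List.range_add, List.filter_append, List.map_append]
  congr 1
  rw [List.filter_map, List.map_map]
  rfl

lemma wordOf_init {n m : ℕ} {s : ℕ → Fin (n+1) → Fin 3}
    (hmv : ∀ i < m, ∃ k, k ≤ n ∧ FibMove (n+1) k (s i) (s (i+1))) :
    wordOf (n+1) m s = wordOf n m (fun i => Fin.init (s i)) := by
  cases n with
  | zero =>
    cases m with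
    | zero => rfl
    | succ m' =>
      obtain ⟨k, hk, hm⟩ := hmv 0 (by omega)
      have := hm.1
      omega
  | succ n' =>
    unfold wordOf
    rw [List.filter_congr (fun i hi => ?_)]
    · apply List.map_congr_left
      intro a ha
      rw [dif_pos (by omega : 0 < n'+1+1), dif_pos (by omega : 0 < n'+1)]
      rfl
    · rw [List.mem_range] at hi
      rw [decide_eq_decide]
      constructor
      · intro h
        exact fibMove_init h (by omega)
      · intro h
        obtain ⟨k, hk, hmk⟩ := hmv i hi
        have hk1 : k = 1 := by
          by_contra hk1
          have hk2 : 2 ≤ k := by have := hmk.1; omega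
          obtain ⟨hne, hoth⟩ := (fibMove_one_iff (by omega)).1 h
          have hj : (k-1) < n'+1 := by omega
          have h1 := hoth ⟨k-1, hj⟩ (by simp only [Fin.val_mk]; omega)
          -- but disk k moves from X to Z
          obtain ⟨-, -, X, Y, Z, -, -, hXZ, hX, -, -, hZ, -⟩ := hmk
          have e1 : s i (Fin.castSucc ⟨k-1, hj⟩) = X :=
            hX _ (by simp only [Fin.coe_castSucc, Fin.val_mk]; omega)
          have e2 : s (i+1) (Fin.castSucc ⟨k-1, hj⟩) = Z :=
            hZ _ (Or.inl (by simp only [Fin.coe_castSucc, Fin.val_mk]; omega))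
          have h1' : s (i+1) (Fin.castSucc ⟨k-1, hj⟩) = s i (Fin.castSucc ⟨k-1, hj⟩) := h1
          rw [e1, e2] at h1'
          exact hXZ h1'.symm
        rw [hk1] at hmk
        exact hmk

lemma wordOf_reflect (c : Fin 3) {n m : ℕ} {s : ℕ → Fin n → Fin 3} :
    wordOf n m (fun i j => c - s i j) = (wordOf n m s).map not := by
  cases n with
  | zero =>
    have hemp : ∀ (w : ℕ → Fin 0 → Fin 3),
        ((List.range m).filter (fun i => decide (FibMove 0 1 (w i) (w (i+1))))) = [] := by
      intro w
      rw [List.filter_eq_nil_iff]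
      intro a _
      simp only [decide_eq_true_eq]
      intro h
      have := h.2.1
      omega
    unfold wordOf
    rw [hemp, hemp]
    rfl
  | succ n' =>
    unfold wordOf
    rw [List.map_map]
    rw [List.filter_congr (fun i hi => ?_)]
    · apply List.map_congr_left
      intro a ha
      obtain ⟨ha1, ha2⟩ := List.mem_filter.1 ha
      have hmv : FibMove (n'+1) 1 (s a) (s (a+1)) := of_decide_eq_true ha2
      obtain ⟨hne, -⟩ := (fibMove_one_iff (by omega)).1 hmv
      simp only [Function.comp_apply, dif_pos (by omega : 0 < n'+1)]
      exact flip_letter c _ _ hne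
    · rw [decide_eq_decide]
      constructor
      · intro h
        have h2 := fibMove_map (fun x => c - x) (sub3_inj c) h
        have h3 : FibMove (n'+1) 1 (s i) (s (i+1)) := by
          simpa [sub_sub_cancel] using h2
        exact h3
      · intro h
        exact fibMove_map _ (sub3_inj c) h

lemma gensol_reflect (c : Fin 3) {n m : ℕ} {p q : Fin 3} {s : ℕ → Fin n → Fin 3}
    (h : GenSol n p q m s) : GenSol n (c-p) (c-q) m (fun i j => c - s i j) := by
  obtain ⟨h0, hm, hmv⟩ := h
  refine ⟨?_, ?_, ?_⟩
  · funext j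
    show c - s 0 j = c - p
    rw [h0]
  · funext j
    show c - s m j = c - q
    rw [hm]
  · intro i hi
    obtain ⟨k, hk⟩ := hmv i hi
    exact ⟨k, fibMove_map _ (sub3_inj c) hk⟩

end HanoiFib

namespace HanoiFib

lemma key (sol : (n : ℕ) → ℕ → (Fin n → Fin 3))
    (hsol : ∀ n, IsSolution n (Nat.fib (n + 2) - 1) (sol n)) (a : ℕ) :
    muWord (a+2) (sol (a+2)) =
      ((muWord (a+1) (sol (a+1))) ++ (muWord a (sol a))).map not := by
  have f4 : Nat.fib (a+4) = Nat.fib (a+2) + Nat.fib (a+3) := Nat.fib_add_two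
  have f3 : Nat.fib (a+3) = Nat.fib (a+1) + Nat.fib (a+2) := Nat.fib_add_two
  have p2 : 0 < Nat.fib (a+2) := Nat.fib_pos.2 (by omega)
  have p3 : 0 < Nat.fib (a+3) := Nat.fib_pos.2 (by omega)
  have h02 : (0 : Fin 3) ≠ 2 := by decide
  have hw : third 0 2 = 1 := by decide
  have hgs : GenSol (a+2) 0 2 (Nat.fib (a+4)-1) (sol (a+2)) := hsol (a+2)
  obtain ⟨ha, hb, hc, hd, he, hf, hg⟩ := decomp h02 hgs
  rw [hw] at hc hg
  set T := Nat.fib (a+3) - 1 with hTdef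
  set L := Nat.fib (a+2) - 1 with hLdef
  set M := Nat.fib (a+4) - 1 with hMdef
  -- split the word in three parts
  have hsplit : muWord (a+2) (sol (a+2)) =
      wordOf (a+2) T (sol (a+2)) ++
      wordOf (a+2) 1 (fun i => sol (a+2) (T+i)) ++
      wordOf (a+2) L (fun i => sol (a+2) (T+(1+i))) := by
    rw [muWord_eq, show Nat.fib (a+2+2) - 1 = T + (1 + L) by
      have : Nat.fib (a+2+2) = Nat.fib (a+4) := rfl
      omega]
    rw [wordOf_add T (1+L), wordOf_add 1 L]
    rw [List.append_assoc]
  -- the middle word is empty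
  have hmid : wordOf (a+2) 1 (fun i => sol (a+2) (T+i)) = [] := by
    unfold wordOf
    simp only []
    have h0 : ((List.range 1).filter
        (fun i => decide (FibMove (a+2) 1 (sol (a+2) (T+i)) (sol (a+2) (T+(i+1)))))) = [] := by
      rw [List.filter_eq_nil_iff]
      intro x hx
      have hx0 : x = 0 := by simpa [List.mem_range] using hx
      subst hx0
      simp only [decide_eq_true_eq]
      intro hmv1
      obtain ⟨-, hoth⟩ := (fibMove_one_iff (by omega : 0 < a+2)).1 hmv1
      have h1 : sol (a+2) (T+1) (Fin.last (a+1)) = sol (a+2) T (Fin.last (a+1)) :=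
        hoth (Fin.last (a+1)) (by simp only [Fin.val_last]; omega)
      have h2 : sol (a+2) (T+1) (Fin.last (a+1)) = 2 := (hf 0 (by omega)).1
      have h3 : sol (a+2) T (Fin.last (a+1)) = 0 := ha T le_rfl
      rw [h2, h3] at h1
      exact absurd h1 (by decide)
    rw [h0]
    rfl
  -- the prefix word
  have hpreword : wordOf (a+2) T (sol (a+2)) =
      (muWord (a+1) (sol (a+1))).map not := by
    rw [wordOf_init hb]
    have hcg : wordOf (a+1) T (fun i => Fin.init (sol (a+2) i)) =
        wordOf (a+1) T (fun i => Fin.init (sol (a+2) (min i T))) :=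
      wordOf_congr (fun i hi => by rw [show min i T = i by omega])
    rw [hcg]
    -- the reflected optimal solution with a+1 disks
    have hrf := gensol_reflect 0 (hsol (a+1) : GenSol (a+1) 0 2 (Nat.fib (a+3)-1) (sol (a+1)))
    rw [show (0:Fin 3) - 0 = 0 by decide, show (0:Fin 3) - 2 = 1 by decide] at hrf
    have hun := uniq (a+1) 0 1 (by decide) _ _ hc hrf
    have hcg2 : wordOf (a+1) T (fun i => Fin.init (sol (a+2) (min i T))) =
        wordOf (a+1) T (fun i j => (0:Fin 3) - sol (a+1) i j) :=
      wordOf_congr (fun i hi => hun i (by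
        have : Nat.fib (a+1+2) = Nat.fib (a+3) := rfl
        omega))
    rw [hcg2, wordOf_reflect 0, muWord_eq]
  -- the suffix word
  have hsufword : wordOf (a+2) L (fun i => sol (a+2) (T+(1+i))) =
      (muWord a (sol a)).map not := by
    have hmv1 : ∀ i < L, ∃ k, k ≤ a+1 ∧
        FibMove (a+2) k (sol (a+2) (T+(1+i))) (sol (a+2) (T+(1+i)+1)) := by
      intro i hi
      obtain ⟨k, hk, hm⟩ := he i hi
      refine ⟨k, by omega, ?_⟩
      rw [show T+(1+i) = T+1+i by omega]
      exact hm
    rw [wordOf_init hmv1]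
    have hmv2 : ∀ i < L, ∃ k, k ≤ a ∧
        FibMove (a+1) k (Fin.init (sol (a+2) (T+(1+i)))) (Fin.init (sol (a+2) (T+(1+i)+1))) := by
      intro i hi
      obtain ⟨k, hk, hm⟩ := he i hi
      refine ⟨k, hk, ?_⟩
      rw [show T+(1+i) = T+1+i by omega]
      exact fibMove_init hm (by omega)
    rw [wordOf_init hmv2]
    have hcg : wordOf a L (fun i => Fin.init (Fin.init (sol (a+2) (T+(1+i))))) =
        wordOf a L (fun i => Fin.init (Fin.init (sol (a+2) (min (T+1+i) M)))) :=
      wordOf_congr (fun i hi => by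
        rw [show min (T+1+i) M = T+1+i by omega, show T+(1+i) = T+1+i by omega])
    rw [hcg]
    have hrf := gensol_reflect 1 (hsol a : GenSol a 0 2 (Nat.fib (a+2)-1) (sol a))
    rw [show (1:Fin 3) - 0 = 1 by decide, show (1:Fin 3) - 2 = 2 by decide] at hrf
    have hun := uniq a 1 2 (by decide) _ _ hg hrf
    have hcg2 : wordOf a L (fun i => Fin.init (Fin.init (sol (a+2) (min (T+1+i) M)))) =
        wordOf a L (fun i j => (1:Fin 3) - sol a i j) :=
      wordOf_congr (fun i hi => hun i (by omega))
    rw [hcg2, wordOf_reflect 1, muWord_eq]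
  rw [hsplit, hmid, hpreword, hsufword, List.append_nil, List.map_append]

end HanoiFib

/-- `μ_0` is the empty word, `μ_1 = l`, for every `n ≥ 2` one has
`μ_n = (μ_{n-1} μ_{n-2})^*` (where `*` exchanges the letters `l = false` and
`r = true`), and for every `n ≥ 4`, `μ_n = μ_{n-2} μ_{n-3} μ_{n-3} μ_{n-4}`. -/
theorem hanoiFibonacci_mu_recurrences
    (sol : (n : ℕ) → ℕ → (Fin n → Fin 3))
    (hsol : ∀ n, IsSolution n (Nat.fib (n + 2) - 1) (sol n))
    (μ : ℕ → List Bool) (hμ : ∀ n, μ n = muWord n (sol n)) :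
    μ 0 = [] ∧ μ 1 = [false] ∧
    (∀ n, 2 ≤ n → μ n = (μ (n - 1) ++ μ (n - 2)).map (fun b => !b)) ∧
    (∀ n, 4 ≤ n → μ n = μ (n - 2) ++ μ (n - 3) ++ μ (n - 3) ++ μ (n - 4)) := by

  have hkey : ∀ b, μ (b+2) = ((μ (b+1)) ++ (μ b)).map (fun x => !x) := by
    intro b
    rw [hμ (b+2), hμ (b+1), hμ b]
    exact HanoiFib.key sol hsol b
  refine ⟨?_, ?_, ?_, ?_⟩
  · rw [hμ 0]
    rfl
  · rw [hμ 1]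
    obtain ⟨h0, h1, hmv⟩ := hsol 1
    obtain ⟨k, hk⟩ := hmv 0 (by
      have : Nat.fib (1+2) = 2 := rfl
      omega)
    have hk1 : k = 1 := by
      have := hk.1
      have := hk.2.1
      omega
    rw [hk1] at hk
    show HanoiFib.wordOf 1 (Nat.fib (1+2) - 1) (sol 1) = [false]
    have e : Nat.fib (1+2) - 1 = 1 := rfl
    rw [e]
    unfold HanoiFib.wordOf
    have hp : (decide (FibMove 1 1 (sol 1 0) (sol 1 (0+1))) : Bool) = true := decide_eq_true hk
    rw [show List.range 1 = [0] from rfl]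
    simp only [List.filter_cons, List.filter_nil, hp, if_true, List.map_cons, List.map_nil]
    have hv1 : sol 1 (0+1) = (fun _ : Fin 1 => (2 : Fin 3)) := h1
    rw [hv1, h0]
    decide
  · intro n hn
    obtain ⟨b, rfl⟩ : ∃ b, n = b+2 := ⟨n-2, by omega⟩
    exact hkey b
  · intro n hn
    obtain ⟨b, rfl⟩ : ∃ b, n = b+4 := ⟨n-4, by omega⟩
    show μ (b+4) = μ (b+2) ++ μ (b+1) ++ μ (b+1) ++ μ b
    have h1 : μ (b+4) = ((μ (b+3)) ++ (μ (b+2))).map (fun x => !x) := hkey (b+2)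
    have h2 : μ (b+3) = ((μ (b+2)) ++ (μ (b+1))).map (fun x => !x) := hkey (b+1)
    have h3 : μ (b+2) = ((μ (b+1)) ++ (μ b)).map (fun x => !x) := hkey b
    rw [h1, h2, h3]
    simp only [List.map_append, List.map_map, List.append_assoc]
    simp [Function.comp_def, Bool.not_not]
end

section
/- Writing |w|_d for the number of occurrences of the letter d ∈ {l, r} in a word w, for every n ≥ 0 one has |μ_{3n}|_r = |μ_{3n}|_l, |μ_{3n+1}|_l − |μ_{3n+1}|_r = 1, and |μ_{3n+2}|_r − |μ_{3n+2}|_l = 1. -/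
namespace HanoiBal

abbrev St (n : ℕ) := Fin n → Fin 3

def Cst (n : ℕ) (a : Fin 3) : St n := fun _ => a

def Econf (n : ℕ) (Y Z : Fin 3) : St n := fun i => if (i : ℕ) + 1 = n then Z else Y

def res {n : ℕ} (v : St (n+1)) : St n := fun i => v i.castSucc

noncomputable def step (n : ℕ) (s : ℕ → St n) (t : ℕ) : ℤ :=
  if h : 0 < n then
    if FibMove n 1 (s t) (s (t+1)) then
      (if s (t+1) ⟨0, h⟩ = s t ⟨0, h⟩ + 1 then 1 else -1)
    else 0
  else 0

noncomputable def Dx (n : ℕ) (s : ℕ → St n) (i j : ℕ) : ℤ := ∑ t ∈ Finset.Ico i j, step n s t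

def Valid (n : ℕ) (s : ℕ → St n) (i j : ℕ) : Prop :=
  ∀ t, i ≤ t → t < j → ∃ k, FibMove n k (s t) (s (t+1))

def dd (n : ℕ) : ℤ := if n % 3 = 0 then 0 else if n % 3 = 1 then 1 else -1

def dl (n : ℕ) (a c : Fin 3) : ℤ := if c = a + 1 then dd n else - dd n

def el (n : ℕ) (a c : Fin 3) : ℤ := if n ≤ 1 then 0 else dl (n-1) a c

def MAIN (n : ℕ) : Prop := ∀ (s : ℕ → St n) (i j : ℕ) (a c : Fin 3),
  i ≤ j → Valid n s i j → s i = Cst n a → s j = Cst n c → a ≠ c →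
  Nat.fib (n+2) - 1 ≤ j - i ∧ (j - i = Nat.fib (n+2) - 1 → Dx n s i j = dl n a c)

def EMAIN (n : ℕ) : Prop := ∀ (s : ℕ → St n) (i j : ℕ) (Y Z : Fin 3),
  i ≤ j → Valid n s i j → s i = Econf n Y Z → s j = Cst n Z → Y ≠ Z →
  Nat.fib (n+1) - 1 ≤ j - i ∧ (j - i = Nat.fib (n+1) - 1 → Dx n s i j = el n Y Z)

def GMAIN (n : ℕ) : Prop := ∀ (s : ℕ → St n) (i j : ℕ) (Y Z W : Fin 3),
  i ≤ j → Valid n s i j → s i = Econf n Y Z → s j = Cst n W → Y ≠ Z → W ≠ Z →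
  Nat.fib n ≤ j - i

theorem fibMove_fix {n k : ℕ} {s s' : St n} (h : FibMove n k s s') (i : Fin n)
    (h1 : (i:ℕ) + 1 ≠ k) (h2 : (i:ℕ) + 2 ≠ k) : s' i = s i := by
  obtain ⟨-, -, X, Y, Z, -, -, -, -, -, -, -, hkeep⟩ := h
  exact hkeep i h1 h2

theorem fibMove_change {n k : ℕ} {s s' : St n} (h : FibMove n k s s') (i : Fin n)
    (hi : (i:ℕ) + 1 = k) : s' i ≠ s i := by
  obtain ⟨-, -, X, Y, Z, -, -, hxz, hX, -, -, hZ, -⟩ := h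
  rw [hZ i (Or.inl hi), hX i hi]
  exact Ne.symm hxz

theorem fibMove_one_fix {n : ℕ} {s s' : St n} (h : FibMove n 1 s s') (i : Fin n)
    (hi : 1 ≤ (i:ℕ)) : s' i = s i := fibMove_fix h i (by omega) (by omega)

theorem fibMove_res {n k : ℕ} {s s' : St (n+1)} (h : FibMove (n+1) k s s') (hk : k ≤ n) :
    FibMove n k (res s) (res s') := by
  obtain ⟨h1, -, X, Y, Z, hxy, hyz, hxz, hX, hnX, hY, hZ, hkeep⟩ := h
  exact ⟨h1, hk, X, Y, Z, hxy, hyz, hxz,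
    fun i hi => hX i.castSucc (by simpa using hi),
    fun i hi => hnX i.castSucc (by simpa using hi),
    fun i hi => hY i.castSucc (by simpa using hi),
    fun i hi => hZ i.castSucc (by simpa using hi),
    fun i hi1 hi2 => hkeep i.castSucc (by simpa using hi1) (by simpa using hi2)⟩

set_option maxHeartbeats 1000000 in
theorem step_res {n : ℕ} (hn : 1 ≤ n) {s : ℕ → St (n+1)} {t k : ℕ}
    (h : FibMove (n+1) k (s t) (s (t+1))) (hk : k ≤ n) :
    step (n+1) s t = step n (fun u => res (s u)) t := by
  have h1k : 1 ≤ k := h.1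
  rcases eq_or_lt_of_le h1k with hk1 | hk2
  · -- k = 1
    have hk1' : k = 1 := hk1.symm
    subst hk1'
    have hres : FibMove n 1 (res (s t)) (res (s (t+1))) := fibMove_res h hk
    have e1 : (res (s (t+1))) ⟨0, by omega⟩ = s (t+1) ⟨0, by omega⟩ := rfl
    have e2 : (res (s t)) ⟨0, by omega⟩ = s t ⟨0, by omega⟩ := rfl
    simp only [step, dif_pos (show 0 < n+1 by omega), dif_pos (show 0 < n by omega),
      if_pos h, if_pos hres]
    by_cases hdir : s (t+1) ⟨0, by omega⟩ = s t ⟨0, by omega⟩ + 1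
    · rw [if_pos hdir, if_pos (show (res (s (t+1))) ⟨0, by omega⟩ = (res (s t)) ⟨0, by omega⟩ + 1 from hdir)]
    · rw [if_neg hdir, if_neg (show ¬ ((res (s (t+1))) ⟨0, by omega⟩ = (res (s t)) ⟨0, by omega⟩ + 1) from hdir)]
  · -- 2 ≤ k
    have hup : ¬ FibMove (n+1) 1 (s t) (s (t+1)) := by
      intro h1
      have hfix := fibMove_one_fix h1 ⟨k-1, by omega⟩ (by simp; omega)
      exact fibMove_change h ⟨k-1, by omega⟩ (by simp; omega) hfix
    have hlow : ¬ FibMove n 1 (res (s t)) (res (s (t+1))) := by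
      intro h1
      have hres := fibMove_res h hk
      have hfix := fibMove_one_fix h1 ⟨k-1, by omega⟩ (by simp; omega)
      exact fibMove_change hres ⟨k-1, by omega⟩ (by simp; omega) hfix
    simp [step, hup, hlow]

theorem top_const {n : ℕ} {s : ℕ → St (n+1)} {i j : ℕ}
    (hv : ∀ t, i ≤ t → t < j → ∃ k, k ≤ n ∧ FibMove (n+1) k (s t) (s (t+1))) :
    ∀ t, i ≤ t → t ≤ j → s t (Fin.last n) = s i (Fin.last n) := by
  intro t hit
  induction t, hit using Nat.le_induction with
  | base => intro _; rfl
  | succ t hit ih =>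
    intro htj
    obtain ⟨k, hk, hm⟩ := hv t hit (by omega)
    rw [fibMove_fix hm (Fin.last n) (by simp only [Fin.val_last]; omega) (by simp only [Fin.val_last]; omega)]
    exact ih (by omega)

theorem big_decode {n : ℕ} {s s' : St (n+1)} (h : FibMove (n+1) (n+1) s s') :
    ∃ X Y Z : Fin 3, X ≠ Y ∧ Y ≠ Z ∧ X ≠ Z ∧
      s (Fin.last n) = X ∧ s' (Fin.last n) = Z ∧
      res s = Cst n Y ∧ res s' = Econf n Y Z := by
  obtain ⟨-, -, X, Y, Z, hxy, hyz, hxz, hX, hnX, hY, hZ, hkeep⟩ := h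
  refine ⟨X, Y, Z, hxy, hyz, hxz, hX _ (by simp [Fin.val_last]),
    hZ _ (Or.inl (by simp [Fin.val_last])), ?_, ?_⟩
  · funext i
    exact hY i.castSucc (by have := i.isLt; simp only [Fin.coe_castSucc]; omega)
  · funext i
    by_cases hc : (i:ℕ) + 1 = n
    · have hz : s' i.castSucc = Z := hZ i.castSucc (Or.inr (by simp only [Fin.coe_castSucc]; omega))
      simp [res, Econf, hc, hz]
    · have h1 : s' i.castSucc = s i.castSucc :=
        hkeep i.castSucc (by have := i.isLt; simp only [Fin.coe_castSucc]; omega)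
          (by simp only [Fin.coe_castSucc]; omega)
      have h2 : s i.castSucc = Y := hY i.castSucc (by have := i.isLt; simp only [Fin.coe_castSucc]; omega)
      simp [res, Econf, hc, h1, h2]

theorem no_big_small {n : ℕ} {s : ℕ → St (n+1)} {i j i' j' : ℕ}
    (hv : Valid (n+1) s i j) (h1 : i ≤ i') (h2 : j' ≤ j)
    (hnb : ∀ t, i' ≤ t → t < j' → ¬ FibMove (n+1) (n+1) (s t) (s (t+1))) :
    ∀ t, i' ≤ t → t < j' → ∃ k, k ≤ n ∧ FibMove (n+1) k (s t) (s (t+1)) := by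
  intro t ht1 ht2
  obtain ⟨k, hm⟩ := hv t (by omega) (by omega)
  have hk' : k ≤ n + 1 := hm.2.1
  rcases eq_or_lt_of_le hk' with he | hl
  · rw [he] at hm
    exact absurd hm (hnb t ht1 ht2)
  · exact ⟨k, by omega, hm⟩

theorem valid_res {n : ℕ} {s : ℕ → St (n+1)} {i' j' : ℕ}
    (h : ∀ t, i' ≤ t → t < j' → ∃ k, k ≤ n ∧ FibMove (n+1) k (s t) (s (t+1))) :
    Valid n (fun u => res (s u)) i' j' :=
  fun t h1 h2 => (h t h1 h2).elim fun k hk => ⟨k, fibMove_res hk.2 hk.1⟩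

theorem Dx_res {n : ℕ} (hn : 1 ≤ n) {s : ℕ → St (n+1)} {i' j' : ℕ}
    (h : ∀ t, i' ≤ t → t < j' → ∃ k, k ≤ n ∧ FibMove (n+1) k (s t) (s (t+1))) :
    Dx (n+1) s i' j' = Dx n (fun u => res (s u)) i' j' := by
  unfold Dx
  apply Finset.sum_congr rfl
  intro t ht
  rw [Finset.mem_Ico] at ht
  obtain ⟨k, hk, hm⟩ := h t ht.1 ht.2
  exact step_res hn hm hk

theorem Dx_split {n : ℕ} (s : ℕ → St n) {i t j : ℕ} (h1 : i ≤ t) (h2 : t ≤ j) :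
    Dx n s i j = Dx n s i t + Dx n s t j := (Finset.sum_Ico_consecutive _ h1 h2).symm

theorem Dx_single {n : ℕ} (s : ℕ → St n) (t : ℕ) : Dx n s t (t+1) = step n s t := by
  unfold Dx
  rw [Finset.sum_Ico_succ_top (le_refl t), Finset.Ico_self, Finset.sum_empty, zero_add]

theorem res_cst {n : ℕ} {a : Fin 3} : res (Cst (n+1) a) = Cst n a := rfl

theorem res_econf {n : ℕ} {Y Z : Fin 3} : res (Econf (n+1) Y Z) = Cst n Y := by
  funext i
  show (if ((i.castSucc : Fin (n+1)) : ℕ) + 1 = n + 1 then Z else Y) = Y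
  rw [if_neg (by have := i.isLt; simp; omega)]

theorem econf_last {n : ℕ} {Y Z : Fin 3} : Econf (n+1) Y Z (Fin.last n) = Z := by
  show (if ((Fin.last n : Fin (n+1)) : ℕ) + 1 = n + 1 then Z else Y) = Z
  rw [if_pos (by simp [Fin.val_last])]

theorem dd_rec (n : ℕ) : dd (n+2) = - dd (n+1) - dd n := by
  unfold dd
  rcases (by omega : n % 3 = 0 ∨ n % 3 = 1 ∨ n % 3 = 2) with h | h | h
  · have e1 : (n+1) % 3 = 1 := by omega
    have e2 : (n+2) % 3 = 2 := by omega
    simp [h, e1, e2]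
  · have e1 : (n+1) % 3 = 2 := by omega
    have e2 : (n+2) % 3 = 0 := by omega
    simp [h, e1, e2]
  · have e1 : (n+1) % 3 = 0 := by omega
    have e2 : (n+2) % 3 = 1 := by omega
    simp [h, e1, e2]

theorem dl_rec {n : ℕ} (hn : 1 ≤ n) {a c Y : Fin 3} (hac : a ≠ c) (hYa : Y ≠ a) (hYc : Y ≠ c) :
    dl (n+1) a c = dl n a Y + el n Y c := by
  obtain ⟨m, rfl⟩ : ∃ m, n = m + 1 := ⟨n-1, by omega⟩
  rcases Nat.eq_zero_or_pos m with hm | hm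
  · subst hm
    revert hac hYa hYc
    fin_cases a <;> fin_cases c <;> fin_cases Y <;> decide
  · obtain ⟨p, rfl⟩ : ∃ p, m = p + 1 := ⟨m-1, by omega⟩
    have hel : el (p+2) Y c = dl (p+1) Y c := by
      unfold el
      rw [if_neg (by omega)]
      rfl
    rw [hel]
    have hrec := dd_rec (p+1)
    fin_cases a <;> fin_cases c <;> fin_cases Y <;>
      simp_all (config := { decide := true }) [dl] <;> linarith

theorem main_step {n : ℕ} (hn : 1 ≤ n) (hM : MAIN n) (hE : EMAIN n) : MAIN (n+1) := by
  intro s i j a c hij hv hsi hsj hac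
  classical
  have hf1 : 0 < Nat.fib (n+1) := Nat.fib_pos.mpr (by omega)
  have hf2 : 0 < Nat.fib (n+2) := Nat.fib_pos.mpr (by omega)
  have hfib : Nat.fib (n+1+2) = Nat.fib (n+1) + Nat.fib (n+2) := Nat.fib_add_two
  set B := (Finset.Ico i j).filter (fun t => FibMove (n+1) (n+1) (s t) (s (t+1))) with hBdef
  have hmemB : ∀ t, t ∈ B ↔ (i ≤ t ∧ t < j) ∧ FibMove (n+1) (n+1) (s t) (s (t+1)) := by
    intro t
    rw [hBdef, Finset.mem_filter, Finset.mem_Ico]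
  have hBne : B.Nonempty := by
    by_contra hne
    have hnb : ∀ t, i ≤ t → t < j → ¬ FibMove (n+1) (n+1) (s t) (s (t+1)) := by
      intro t h1 h2 hb
      exact hne ⟨t, (hmemB t).mpr ⟨⟨h1, h2⟩, hb⟩⟩
    have hsm := no_big_small hv (le_refl i) (le_refl j) hnb
    have h := top_const hsm j hij (le_refl j)
    rw [hsi, hsj] at h
    exact hac h.symm
  obtain ⟨t₁, ht₁B, ht₁min⟩ : ∃ t₁, t₁ ∈ B ∧ ∀ t ∈ B, t₁ ≤ t :=
    ⟨B.min' hBne, Finset.min'_mem B hBne, fun t ht => Finset.min'_le B t ht⟩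
  obtain ⟨t₂, ht₂B, ht₂max⟩ : ∃ t₂, t₂ ∈ B ∧ ∀ t ∈ B, t ≤ t₂ :=
    ⟨B.max' hBne, Finset.max'_mem B hBne, fun t ht => Finset.le_max' B t ht⟩
  rw [hmemB] at ht₁B ht₂B
  obtain ⟨⟨hit₁, ht₁j⟩, hbig₁⟩ := ht₁B
  obtain ⟨⟨hit₂, ht₂j⟩, hbig₂⟩ := ht₂B
  have ht₁₂ : t₁ ≤ t₂ := ht₁min t₂ ((hmemB t₂).mpr ⟨⟨hit₂, ht₂j⟩, hbig₂⟩)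
  have hnb1 : ∀ t, i ≤ t → t < t₁ → ¬ FibMove (n+1) (n+1) (s t) (s (t+1)) := by
    intro t h1 h2 hb
    have := ht₁min t ((hmemB t).mpr ⟨⟨h1, by omega⟩, hb⟩)
    omega
  have hsm0 := no_big_small hv (le_refl i) (le_of_lt ht₁j) hnb1
  obtain ⟨X₁, Y₁, Z₁, hxy₁, hyz₁, hxz₁, hlX₁, hlZ₁, hrY₁, hrE₁⟩ := big_decode hbig₁
  have hX1a : X₁ = a := by
    have h := top_const hsm0 t₁ hit₁ (le_refl t₁)
    rw [hsi, hlX₁] at h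
    exact h
  have hY1a : Y₁ ≠ a := by rw [← hX1a]; exact Ne.symm hxy₁
  by_cases ht12 : t₁ = t₂
  · -- exactly one big step
    have hnb2 : ∀ t, t₁ + 1 ≤ t → t < j → ¬ FibMove (n+1) (n+1) (s t) (s (t+1)) := by
      intro t h1 h2 hb
      have := ht₂max t ((hmemB t).mpr ⟨⟨by omega, h2⟩, hb⟩)
      omega
    have hsm2 := no_big_small hv (by omega) (le_refl j) hnb2
    have hZ1c : Z₁ = c := by
      have h := top_const hsm2 j (by omega) (le_refl j)
      rw [hsj, hlZ₁] at h
      exact h.symm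
    have hY1c : Y₁ ≠ c := by rw [← hZ1c]; exact hyz₁
    obtain ⟨hb0, he0⟩ := hM (fun u => res (s u)) i t₁ a Y₁ hit₁ (valid_res hsm0)
      (by show res (s i) = Cst n a; rw [hsi]; rfl) hrY₁ (Ne.symm hY1a)
    have hrE₁' : res (s (t₁+1)) = Econf n Y₁ c := by rw [← hZ1c]; exact hrE₁
    obtain ⟨hb1, he1⟩ := hE (fun u => res (s u)) (t₁+1) j Y₁ c (by omega) (valid_res hsm2)
      hrE₁' (by show res (s j) = Cst n c; rw [hsj]; rfl) hY1c
    constructor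
    · omega
    · intro hlen
      have e0 : t₁ - i = Nat.fib (n+2) - 1 := by omega
      have e1 : j - (t₁+1) = Nat.fib (n+1) - 1 := by omega
      have hd0 := he0 e0
      have hd1 := he1 e1
      have hstep : step (n+1) s t₁ = 0 := by
        have hnot : ¬ FibMove (n+1) 1 (s t₁) (s (t₁+1)) := by
          intro h1
          have hfix := fibMove_one_fix h1 (Fin.last n) (by simp only [Fin.val_last]; omega)
          rw [hlZ₁, hlX₁] at hfix
          exact hxz₁ hfix.symm
        simp [step, hnot]
      have hsplit : Dx (n+1) s i j
          = Dx (n+1) s i t₁ + step (n+1) s t₁ + Dx (n+1) s (t₁+1) j := by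
        rw [Dx_split s hit₁ (show t₁ ≤ j by omega),
            Dx_split s (show t₁ ≤ t₁+1 by omega) (show t₁+1 ≤ j by omega),
            Dx_single]
        ring
      rw [hsplit, hstep, Dx_res hn hsm0, Dx_res hn hsm2, hd0, hd1,
          dl_rec hn hac hY1a hY1c]
      ring
  · -- at least two big steps: impossible to be tight
    have ht₁₂' : t₁ < t₂ := lt_of_le_of_ne ht₁₂ ht12
    have hnb3 : ∀ t, t₂ + 1 ≤ t → t < j → ¬ FibMove (n+1) (n+1) (s t) (s (t+1)) := by
      intro t h1 h2 hb
      have := ht₂max t ((hmemB t).mpr ⟨⟨by omega, h2⟩, hb⟩)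
      omega
    have hsm3 := no_big_small hv (by omega) (le_refl j) hnb3
    obtain ⟨X₂, Y₂, Z₂, hxy₂, hyz₂, hxz₂, hlX₂, hlZ₂, hrY₂, hrE₂⟩ := big_decode hbig₂
    have hZ2c : Z₂ = c := by
      have h := top_const hsm3 j (by omega) (le_refl j)
      rw [hsj, hlZ₂] at h
      exact h.symm
    obtain ⟨hb0, -⟩ := hM (fun u => res (s u)) i t₁ a Y₁ hit₁ (valid_res hsm0)
      (by show res (s i) = Cst n a; rw [hsi]; rfl) hrY₁ (Ne.symm hY1a)
    have hrE₂' : res (s (t₂+1)) = Econf n Y₂ c := by rw [← hZ2c]; exact hrE₂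
    obtain ⟨hb1, -⟩ := hE (fun u => res (s u)) (t₂+1) j Y₂ c (by omega) (valid_res hsm3)
      hrE₂' (by show res (s j) = Cst n c; rw [hsj]; rfl) (by rw [← hZ2c]; exact hyz₂)
    exact ⟨by omega, fun hlen => absurd hlen (by omega)⟩

theorem g_step {n : ℕ} (hE : EMAIN n) : GMAIN (n+1) := by
  intro s i j Y Z W hij hv hsi hsj hYZ hWZ
  classical
  have hf1 : 0 < Nat.fib (n+1) := Nat.fib_pos.mpr (by omega)
  set B := (Finset.Ico i j).filter (fun t => FibMove (n+1) (n+1) (s t) (s (t+1))) with hBdef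
  have hmemB : ∀ t, t ∈ B ↔ (i ≤ t ∧ t < j) ∧ FibMove (n+1) (n+1) (s t) (s (t+1)) := by
    intro t
    rw [hBdef, Finset.mem_filter, Finset.mem_Ico]
  have hBne : B.Nonempty := by
    by_contra hne
    have hnb : ∀ t, i ≤ t → t < j → ¬ FibMove (n+1) (n+1) (s t) (s (t+1)) := by
      intro t h1 h2 hb
      exact hne ⟨t, (hmemB t).mpr ⟨⟨h1, h2⟩, hb⟩⟩
    have hsm := no_big_small hv (le_refl i) (le_refl j) hnb
    have h := top_const hsm j hij (le_refl j)
    rw [hsi, hsj] at h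
    exact hWZ (h.trans econf_last)
  obtain ⟨t₂, ht₂B, ht₂max⟩ : ∃ t₂, t₂ ∈ B ∧ ∀ t ∈ B, t ≤ t₂ :=
    ⟨B.max' hBne, Finset.max'_mem B hBne, fun t ht => Finset.le_max' B t ht⟩
  rw [hmemB] at ht₂B
  obtain ⟨⟨hit₂, ht₂j⟩, hbig₂⟩ := ht₂B
  have hnb3 : ∀ t, t₂ + 1 ≤ t → t < j → ¬ FibMove (n+1) (n+1) (s t) (s (t+1)) := by
    intro t h1 h2 hb
    have := ht₂max t ((hmemB t).mpr ⟨⟨by omega, h2⟩, hb⟩)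
    omega
  have hsm3 := no_big_small hv (by omega) (le_refl j) hnb3
  obtain ⟨X₂, Y₂, Z₂, hxy₂, hyz₂, hxz₂, hlX₂, hlZ₂, hrY₂, hrE₂⟩ := big_decode hbig₂
  have hZ2W : Z₂ = W := by
    have h := top_const hsm3 j (by omega) (le_refl j)
    rw [hsj, hlZ₂] at h
    exact h.symm
  have hrE₂' : res (s (t₂+1)) = Econf n Y₂ W := by rw [← hZ2W]; exact hrE₂
  obtain ⟨hb1, -⟩ := hE (fun u => res (s u)) (t₂+1) j Y₂ W (by omega) (valid_res hsm3)
    hrE₂' (by show res (s j) = Cst n W; rw [hsj]; rfl) (by rw [← hZ2W]; exact hyz₂)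
  omega

theorem emain_step {n : ℕ} (hn : 1 ≤ n) (hM : MAIN n) (hE : EMAIN n) (hG : GMAIN n) :
    EMAIN (n+1) := by
  intro s i j Y Z hij hv hsi hsj hYZ
  classical
  have hf0 : 0 < Nat.fib n := Nat.fib_pos.mpr (by omega)
  have hf1 : 0 < Nat.fib (n+1) := Nat.fib_pos.mpr (by omega)
  have hf2 : 0 < Nat.fib (n+2) := Nat.fib_pos.mpr (by omega)
  have hfib : Nat.fib (n+1+1) = Nat.fib n + Nat.fib (n+1) := Nat.fib_add_two
  have hfx : Nat.fib (n+1+1) = Nat.fib (n+2) := rfl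
  set B := (Finset.Ico i j).filter (fun t => FibMove (n+1) (n+1) (s t) (s (t+1))) with hBdef
  have hmemB : ∀ t, t ∈ B ↔ (i ≤ t ∧ t < j) ∧ FibMove (n+1) (n+1) (s t) (s (t+1)) := by
    intro t
    rw [hBdef, Finset.mem_filter, Finset.mem_Ico]
  by_cases hBne : B.Nonempty
  · -- at least one, hence at least two, big steps: not tight
    obtain ⟨t₁, ht₁B, ht₁min⟩ : ∃ t₁, t₁ ∈ B ∧ ∀ t ∈ B, t₁ ≤ t :=
      ⟨B.min' hBne, Finset.min'_mem B hBne, fun t ht => Finset.min'_le B t ht⟩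
    obtain ⟨t₂, ht₂B, ht₂max⟩ : ∃ t₂, t₂ ∈ B ∧ ∀ t ∈ B, t ≤ t₂ :=
      ⟨B.max' hBne, Finset.max'_mem B hBne, fun t ht => Finset.le_max' B t ht⟩
    rw [hmemB] at ht₁B ht₂B
    obtain ⟨⟨hit₁, ht₁j⟩, hbig₁⟩ := ht₁B
    obtain ⟨⟨hit₂, ht₂j⟩, hbig₂⟩ := ht₂B
    have ht₁₂ : t₁ ≤ t₂ := ht₁min t₂ ((hmemB t₂).mpr ⟨⟨hit₂, ht₂j⟩, hbig₂⟩)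
    have hnb1 : ∀ t, i ≤ t → t < t₁ → ¬ FibMove (n+1) (n+1) (s t) (s (t+1)) := by
      intro t h1 h2 hb
      have := ht₁min t ((hmemB t).mpr ⟨⟨h1, by omega⟩, hb⟩)
      omega
    have hsm0 := no_big_small hv (le_refl i) (le_of_lt ht₁j) hnb1
    obtain ⟨X₁, Y₁, Z₁, hxy₁, hyz₁, hxz₁, hlX₁, hlZ₁, hrY₁, hrE₁⟩ := big_decode hbig₁
    have hX1Z : X₁ = Z := by
      have h := top_const hsm0 t₁ hit₁ (le_refl t₁)
      rw [hsi, hlX₁] at h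
      rw [h]
      exact econf_last
    have hnb3 : ∀ t, t₂ + 1 ≤ t → t < j → ¬ FibMove (n+1) (n+1) (s t) (s (t+1)) := by
      intro t h1 h2 hb
      have := ht₂max t ((hmemB t).mpr ⟨⟨by omega, h2⟩, hb⟩)
      omega
    have hsm3 := no_big_small hv (by omega) (le_refl j) hnb3
    obtain ⟨X₂, Y₂, Z₂, hxy₂, hyz₂, hxz₂, hlX₂, hlZ₂, hrY₂, hrE₂⟩ := big_decode hbig₂
    have hZ2Z : Z₂ = Z := by
      have h := top_const hsm3 j (by omega) (le_refl j)
      rw [hsj, hlZ₂] at h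
      exact h.symm
    have ht₁₂' : t₁ < t₂ := by
      rcases eq_or_lt_of_le ht₁₂ with he | hl
      · exfalso
        rw [← he] at hlZ₂
        rw [hlZ₁] at hlZ₂
        exact hxz₁ (by rw [hX1Z, ← hZ2Z, hlZ₂])
      · exact hl
    have hrE₂' : res (s (t₂+1)) = Econf n Y₂ Z := by rw [← hZ2Z]; exact hrE₂
    obtain ⟨hb1, -⟩ := hE (fun u => res (s u)) (t₂+1) j Y₂ Z (by omega) (valid_res hsm3)
      hrE₂' (by show res (s j) = Cst n Z; rw [hsj]; rfl) (by rw [← hZ2Z]; exact hyz₂)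
    by_cases hY1 : Y₁ = Y
    · -- first big step happens with small disks still on Y: use GMAIN on next segment
      have hmemB' : ∀ t, t ∈ B.filter (fun t => t₁ < t) ↔ ((i ≤ t ∧ t < j) ∧ FibMove (n+1) (n+1) (s t) (s (t+1))) ∧ t₁ < t := by
        intro t
        rw [Finset.mem_filter, hmemB]
      have hB'ne : (B.filter (fun t => t₁ < t)).Nonempty :=
        ⟨t₂, (hmemB' t₂).mpr ⟨⟨⟨hit₂, ht₂j⟩, hbig₂⟩, ht₁₂'⟩⟩
      obtain ⟨u, huB, humin⟩ : ∃ u, u ∈ B.filter (fun t => t₁ < t) ∧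
          ∀ t ∈ B.filter (fun t => t₁ < t), u ≤ t :=
        ⟨_, Finset.min'_mem _ hB'ne, fun t ht => Finset.min'_le _ t ht⟩
      rw [hmemB'] at huB
      obtain ⟨⟨⟨hiu, huj⟩, hbigu⟩, ht₁u⟩ := huB
      have hu₂ : u ≤ t₂ := humin t₂ ((hmemB' t₂).mpr ⟨⟨⟨hit₂, ht₂j⟩, hbig₂⟩, ht₁₂'⟩)
      have hnb2 : ∀ t, t₁ + 1 ≤ t → t < u → ¬ FibMove (n+1) (n+1) (s t) (s (t+1)) := by
        intro t h1 h2 hb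
        have := humin t ((hmemB' t).mpr ⟨⟨⟨by omega, by omega⟩, hb⟩, by omega⟩)
        omega
      have hsm2 := no_big_small hv (by omega) (le_of_lt huj) hnb2
      obtain ⟨Xᵤ, Yᵤ, Zᵤ, hxyᵤ, hyzᵤ, hxzᵤ, hlXᵤ, hlZᵤ, hrYᵤ, hrEᵤ⟩ := big_decode hbigu
      have hXuZ1 : Xᵤ = Z₁ := by
        have h := top_const hsm2 u (by omega) (le_refl u)
        rw [hlXᵤ, hlZ₁] at h
        exact h
      have hrE₁' : res (s (t₁+1)) = Econf n Y Z₁ := by rw [← hY1]; exact hrE₁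
      have hYZ1 : Y ≠ Z₁ := by rw [← hY1]; exact hyz₁
      have hYuZ1 : Yᵤ ≠ Z₁ := by rw [← hXuZ1]; exact Ne.symm hxyᵤ
      have hbG := hG (fun u' => res (s u')) (t₁+1) u Y Z₁ Yᵤ (by omega) (valid_res hsm2)
        hrE₁' hrYᵤ hYZ1 hYuZ1
      exact ⟨by omega, fun hlen => absurd hlen (by omega)⟩
    · -- small disks moved to the third peg first: too long as well
      have hYY1 : Y ≠ Y₁ := fun h => hY1 h.symm
      obtain ⟨hb0, -⟩ := hM (fun u => res (s u)) i t₁ Y Y₁ hit₁ (valid_res hsm0)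
        (by show res (s i) = Cst n Y; rw [hsi]; exact res_econf) hrY₁ hYY1
      exact ⟨by omega, fun hlen => absurd hlen (by omega)⟩
  · -- no big step: directly an (n)-disk solution
    have hnb : ∀ t, i ≤ t → t < j → ¬ FibMove (n+1) (n+1) (s t) (s (t+1)) := by
      intro t h1 h2 hb
      exact hBne ⟨t, (hmemB t).mpr ⟨⟨h1, h2⟩, hb⟩⟩
    have hsm := no_big_small hv (le_refl i) (le_refl j) hnb
    obtain ⟨hb, he⟩ := hM (fun u => res (s u)) i j Y Z hij (valid_res hsm)
      (by show res (s i) = Cst n Y; rw [hsi]; exact res_econf)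
      (by show res (s j) = Cst n Z; rw [hsj]; rfl) hYZ
    refine ⟨hb, fun hlen => ?_⟩
    rw [Dx_res hn hsm, he hlen]
    unfold el
    rw [if_neg (by omega)]
    rfl


theorem main0 : MAIN 0 := by
  intro s i j a c hij hv hsi hsj hac
  have h2 : Nat.fib (0+2) = 1 := rfl
  refine ⟨by omega, fun _ => ?_⟩
  have hz : Dx 0 s i j = 0 := Finset.sum_eq_zero (fun t _ => by simp [step])
  rw [hz]
  unfold dl dd
  norm_num

theorem emain0 : EMAIN 0 := by
  intro s i j Y Z hij hv hsi hsj hYZ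
  have h1 : Nat.fib (0+1) = 1 := rfl
  refine ⟨by omega, fun _ => ?_⟩
  have hz : Dx 0 s i j = 0 := Finset.sum_eq_zero (fun t _ => by simp [step])
  rw [hz]
  simp [el]

theorem gmain0 : GMAIN 0 := by
  intro s i j Y Z W hij hv hsi hsj hYZ hWZ
  simp [Nat.fib_zero]

theorem main1 : MAIN 1 := by
  intro s i j a c hij hv hsi hsj hac
  have hf3 : Nat.fib (1+2) = 2 := rfl
  have hij' : i < j := by
    rcases eq_or_lt_of_le hij with h | h
    · exfalso
      apply hac
      have hcc : Cst 1 a = Cst 1 c := by rw [← hsi, ← hsj, h]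
      exact congrFun hcc ⟨0, by omega⟩
    · exact h
  refine ⟨by omega, fun hlen => ?_⟩
  have hj : j = i + 1 := by omega
  subst hj
  obtain ⟨k, hm⟩ := hv i (le_refl i) (by omega)
  have hm1 : FibMove 1 1 (s i) (s (i+1)) := by
    have h1 := hm.1
    have h2 := hm.2.1
    have hk : k = 1 := by omega
    rwa [hk] at hm
  have hsa : s i ⟨0, by omega⟩ = a := by rw [hsi]; rfl
  have hsc : s (i+1) ⟨0, by omega⟩ = c := by rw [hsj]; rfl
  have hDx : Dx 1 s i (i+1) = step 1 s i := Dx_single s i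
  rw [hDx]
  unfold step
  rw [dif_pos (show (0:ℕ) < 1 by omega), if_pos hm1]
  simp only [hsa, hsc]
  unfold dl dd
  norm_num

theorem emain1 : EMAIN 1 := by
  intro s i j Y Z hij hv hsi hsj hYZ
  have hf2 : Nat.fib (1+1) = 1 := rfl
  refine ⟨by omega, fun hlen => ?_⟩
  have hji : j = i := by omega
  subst hji
  unfold Dx
  rw [Finset.Ico_self, Finset.sum_empty]
  simp [el]

theorem P_all : ∀ n, MAIN n ∧ EMAIN n ∧ GMAIN n := by
  intro n
  induction n with
  | zero => exact ⟨main0, emain0, gmain0⟩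
  | succ n ih =>
    rcases Nat.eq_zero_or_pos n with h | h
    · subst h
      exact ⟨main1, emain1, g_step emain0⟩
    · exact ⟨main_step h ih.1 ih.2.1, emain_step h ih.1 ih.2.1 ih.2.2, g_step ih.2.1⟩

def word (n : ℕ) (s : ℕ → St n) (m : ℕ) : List Bool :=
  ((List.range m).filter (fun i => decide (FibMove n 1 (s i) (s (i + 1))))).map
    (fun i => if h : 0 < n then decide (s (i + 1) ⟨0, h⟩ = s i ⟨0, h⟩ + 1) else true)

theorem muWord_eq (n : ℕ) (s : ℕ → St n) : muWord n s = word n s (Nat.fib (n+2) - 1) := rfl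

theorem word_count (n : ℕ) (s : ℕ → St n) (m : ℕ) :
    ((word n s m).count true : ℤ) - ((word n s m).count false) = Dx n s 0 m := by
  induction m with
  | zero => simp [word, Dx]
  | succ m ih =>
    have hsplit : word n s (m+1) = word n s m ++
        (([m].filter (fun i => decide (FibMove n 1 (s i) (s (i + 1))))).map
          (fun i => if h : 0 < n then decide (s (i + 1) ⟨0, h⟩ = s i ⟨0, h⟩ + 1) else true)) := by
      unfold word
      rw [List.range_succ, List.filter_append, List.map_append]
    have hDx : Dx n s 0 (m+1) = Dx n s 0 m + step n s m := by
      unfold Dx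
      rw [Finset.sum_Ico_succ_top (Nat.zero_le _)]
    have htail : (((([m].filter (fun i => decide (FibMove n 1 (s i) (s (i + 1))))).map
          (fun i => if h : 0 < n then decide (s (i + 1) ⟨0, h⟩ = s i ⟨0, h⟩ + 1) else true)).count true : ℤ)
        - ((([m].filter (fun i => decide (FibMove n 1 (s i) (s (i + 1))))).map
          (fun i => if h : 0 < n then decide (s (i + 1) ⟨0, h⟩ = s i ⟨0, h⟩ + 1) else true)).count false : ℤ))
        = step n s m := by
      by_cases hf : FibMove n 1 (s m) (s (m+1))
      · have hn : 0 < n := hf.2.1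
        have hfil : [m].filter (fun i => decide (FibMove n 1 (s i) (s (i + 1)))) = [m] := by
          simp [hf]
        rw [hfil]
        by_cases hdir : s (m + 1) ⟨0, hn⟩ = s m ⟨0, hn⟩ + 1
        · have hg : (if h : 0 < n then decide (s (m + 1) ⟨0, h⟩ = s m ⟨0, h⟩ + 1) else true) = true := by
            rw [dif_pos hn]
            simpa using hdir
          simp [hg, step, hn, hf, hdir]
        · have hg : (if h : 0 < n then decide (s (m + 1) ⟨0, h⟩ = s m ⟨0, h⟩ + 1) else true) = false := by
            rw [dif_pos hn]
            simpa using hdir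
          simp [hg, step, hn, hf, hdir]
      · have hfil : [m].filter (fun i => decide (FibMove n 1 (s i) (s (i + 1)))) = [] := by
          simp [hf]
        rw [hfil]
        simp [step, hf]
    rw [hsplit, List.count_append, List.count_append, hDx]
    push_cast
    push_cast at htail ih
    linarith

theorem count_key (sol : (n : ℕ) → ℕ → (Fin n → Fin 3))
    (hsol : ∀ n, IsSolution n (Nat.fib (n + 2) - 1) (sol n)) (N : ℕ) :
    ((muWord N (sol N)).count true : ℤ) - ((muWord N (sol N)).count false) = - dd N := by
  obtain ⟨h0, hm, hmv⟩ := hsol N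
  have hv : Valid N (sol N) 0 (Nat.fib (N+2) - 1) := fun t _ ht => hmv t ht
  have hP := (P_all N).1 (sol N) 0 (Nat.fib (N+2) - 1) 0 2 (Nat.zero_le _) hv
    (by rw [h0]; rfl) (by rw [hm]; rfl) (by decide)
  have hd := hP.2 (by omega)
  rw [muWord_eq, word_count, hd]
  unfold dl
  rw [if_neg (by decide : ¬ (2 : Fin 3) = 0 + 1)]

end HanoiBal

/-- Writing `|w|_d` for the number of occurrences of the letter
`d ∈ {l, r}` in a word `w` (with `r = true` and `l = false`), for every `n ≥ 0` one has
`|μ_{3n}|_r = |μ_{3n}|_l`, `|μ_{3n+1}|_l − |μ_{3n+1}|_r = 1`, and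
`|μ_{3n+2}|_r − |μ_{3n+2}|_l = 1`. -/
theorem hanoiFibonacci_mu_balance
    (sol : (n : ℕ) → ℕ → (Fin n → Fin 3))
    (hsol : ∀ n, IsSolution n (Nat.fib (n + 2) - 1) (sol n))
    (μ : ℕ → List Bool) (hμ : ∀ n, μ n = muWord n (sol n)) (n : ℕ) :
    (μ (3 * n)).count true = (μ (3 * n)).count false ∧
    (μ (3 * n + 1)).count false = (μ (3 * n + 1)).count true + 1 ∧
    (μ (3 * n + 2)).count true = (μ (3 * n + 2)).count false + 1 := by
  have h0 := HanoiBal.count_key sol hsol (3 * n)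
  have h1 := HanoiBal.count_key sol hsol (3 * n + 1)
  have h2 := HanoiBal.count_key sol hsol (3 * n + 2)
  rw [← hμ (3 * n)] at h0
  rw [← hμ (3 * n + 1)] at h1
  rw [← hμ (3 * n + 2)] at h2
  have d0 : HanoiBal.dd (3*n) = 0 := by unfold HanoiBal.dd; rw [if_pos (by omega)]
  have d1 : HanoiBal.dd (3*n+1) = 1 := by
    unfold HanoiBal.dd; rw [if_neg (by omega), if_pos (by omega)]
  have d2 : HanoiBal.dd (3*n+2) = -1 := by
    unfold HanoiBal.dd; rw [if_neg (by omega), if_neg (by omega)]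
  rw [d0] at h0
  rw [d1] at h1
  rw [d2] at h2
  norm_num at h0 h1 h2
  refine ⟨?_, ?_, ?_⟩ <;> omega
end

section
/- The list G = (g_1, g_2, g_3, …) contains every nonzero ZF-word (up to leading 0s) exactly once; more precisely, for every n ≥ 1 the block N_n = (g_{F_{n+1}}, …, g_{F_{n+2}−1}) has F_n entries, all of which are ZF-words of length n whose leftmost digit is 1, and every ZF-word of length n with leftmost digit 1 occurs exactly once in N_n. -/
/-- A ZF-word: a binary word (leftmost digit at the head of the list) with no two
consecutive digits `1`. -/
def ZFword (w : List Bool) : Prop :=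
  w.Chain' fun a b => ¬(a = true ∧ b = true)

/-- The lists `N_n` of binary words: `N_0 = ()`, `N_1 = (1)` and, for `n ≥ 2`,
`N_n = 10·rev(N_{n-1}') ++ 10·rev(N_{n-2})`, where `L'` removes the leftmost letter
of each word of `L`, `rev` reverses the order of the list and `10·L` prefixes `10`
to each word of `L`. -/
def Nlist : ℕ → List (List Bool)
  | 0 => []
  | 1 => [[true]]
  | (n + 2) =>
      ((Nlist (n + 1)).map List.tail).reverse.map (fun w => true :: false :: w) ++
        (Nlist n).reverse.map (fun w => true :: false :: w)

/-- The `i`-th term `g_i` (for `i ≥ 1`) of the infinite list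
`G = N_1 ++ N_2 ++ N_3 ++ ⋯`; the block `N_n` occupies the (1-indexed) positions
`F (n+1), …, F (n+2) - 1` of `G`. -/
def Gword (i : ℕ) : List Bool :=
  (((List.range (i + 2)).map Nlist).flatten).getD (i - 1) []

/-- The Hamming distance of two binary words (leftmost digit at the head), the shorter
word being padded with leading `0`s: the number of positions (counted from the right)
at which the two words differ. -/
def hammingWords (w w' : List Bool) : ℕ :=
  ((Finset.range (max w.length w'.length)).filter
    (fun i => w.reverse.getD i false ≠ w'.reverse.getD i false)).card

private lemma zf_tf {t : List Bool} : ZFword (true :: false :: t) ↔ ZFword t := by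
  simp [ZFword, List.Chain', List.isChain_cons]

private lemma NlistMain (n : ℕ) :
    (Nlist n).length = Nat.fib n ∧ (Nlist n).Nodup ∧
    ∀ w, w ∈ Nlist n ↔ (w.length = n ∧ ZFword w ∧ w.head? = some true) := by
  induction n using Nat.strong_induction_on with
  | _ n ih =>
    match n with
    | 0 =>
      refine ⟨rfl, List.nodup_nil, fun w => ?_⟩
      simp only [Nlist, List.not_mem_nil, false_iff]
      rintro ⟨hl, -, hh⟩
      rw [List.length_eq_zero_iff] at hl
      subst hl; simp at hh
    | 1 =>
      refine ⟨rfl, by simp [Nlist], fun w => ?_⟩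
      constructor
      · intro hw
        simp only [Nlist, List.mem_singleton] at hw
        subst hw
        exact ⟨rfl, by simp [ZFword, List.Chain'], rfl⟩
      · rintro ⟨hl, -, hh⟩
        match w, hl with
        | [a], _ =>
          simp only [List.head?_cons, Option.some.injEq] at hh
          subst hh
          simp [Nlist]
    | (n + 2) =>
      obtain ⟨h1l, h1n, h1m⟩ := ih (n+1) (by omega)
      obtain ⟨h0l, h0n, h0m⟩ := ih n (by omega)
      have hcons : Function.Injective (fun w : List Bool => true :: false :: w) := by
        intro a b h; simpa using h
      have htail_head : ∀ u ∈ Nlist (n+1), u.tail.head? ≠ some true := by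
        intro u hu
        obtain ⟨hul, huz, huh⟩ := (h1m u).1 hu
        match u, huh with
        | (true :: rest), _ =>
          match rest with
          | [] => simp
          | (b :: t) =>
            rw [ZFword, List.Chain', List.isChain_cons_cons] at huz
            have hb : b = false := by
              cases b
              · rfl
              · exact absurd ⟨rfl, rfl⟩ huz.1
            subst hb; simp
      refine ⟨?_, ?_, ?_⟩
      · simp only [Nlist]
        rw [List.length_append, List.length_map, List.length_reverse,
          List.length_map, List.length_map, List.length_reverse, h1l, h0l,
          Nat.fib_add_two]
        omega
      · simp only [Nlist]
        apply List.Nodup.append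
        · apply List.Nodup.map hcons
          rw [List.nodup_reverse]
          apply List.Nodup.map_on _ h1n
          intro x hx y hy hxy
          obtain ⟨-, -, hxh⟩ := (h1m x).1 hx
          obtain ⟨-, -, hyh⟩ := (h1m y).1 hy
          match x, hxh, y, hyh with
          | (true :: xs), _, (true :: ys), _ => simpa using hxy
        · exact (List.Nodup.map hcons (List.nodup_reverse.mpr h0n))
        · intro a ha hb
          simp only [List.mem_map, List.mem_reverse] at ha hb
          obtain ⟨t, ⟨u, hu, rfl⟩, rfl⟩ := ha
          obtain ⟨v, hv, hveq⟩ := hb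
          have hveq' : v = u.tail := by simpa using hveq
          subst hveq'
          exact htail_head u hu (((h0m _).1 hv).2.2)
      · intro w
        constructor
        · intro hw
          simp only [Nlist, List.mem_append, List.mem_map, List.mem_reverse] at hw
          rcases hw with ⟨t, ⟨u, hu, rfl⟩, rfl⟩ | ⟨v, hv, rfl⟩
          · obtain ⟨hul, huz, huh⟩ := (h1m u).1 hu
            refine ⟨?_, ?_, rfl⟩
            · match u, huh with
              | (true :: rest), _ =>
                have hr : rest.length + 1 = n + 1 := by simpa using hul
                simp only [List.tail_cons, List.length_cons]
                omega
            · exact zf_tf.mpr (List.IsChain.tail huz)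
          · obtain ⟨hvl, hvz, -⟩ := (h0m v).1 hv
            exact ⟨by simp [hvl], zf_tf.mpr hvz, rfl⟩
        · rintro ⟨hl, hz, hh⟩
          rcases w with _ | ⟨a, rest⟩
          · simp at hh
          · simp only [List.head?_cons, Option.some.injEq] at hh
            subst hh
            rcases rest with _ | ⟨b, t⟩
            · simp only [List.length_cons, List.length_nil] at hl
              omega
            · rw [ZFword, List.Chain', List.isChain_cons_cons] at hz
              have hb : b = false := by
                cases b
                · rfl
                · exact absurd ⟨rfl, rfl⟩ hz.1
              subst hb
              have htz : ZFword t := by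
                have h2 := hz.2
                rw [List.isChain_cons] at h2
                exact h2.2
              have htl : t.length = n := by simpa using hl
              simp only [Nlist, List.mem_append, List.mem_map, List.mem_reverse]
              by_cases hth : t.head? = some true
              · right
                exact ⟨t, (h0m t).2 ⟨htl, htz, hth⟩, rfl⟩
              · left
                refine ⟨t, ?_, rfl⟩
                refine ⟨true :: t, (h1m _).2 ⟨by simp [htl], ?_, rfl⟩, rfl⟩
                rw [ZFword, List.Chain', List.isChain_cons]
                refine ⟨?_, htz⟩
                intro y hy
                rcases t with _ | ⟨c, ts⟩
                · simp at hy
                · simp only [List.head?_cons, Option.mem_def, Option.some.injEq] at hy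
                  subst hy
                  rintro ⟨-, hc⟩
                  exact hth (by simp [hc])

private lemma flatten_len (n : ℕ) :
    (((List.range n).map Nlist).flatten).length + 1 = Nat.fib (n + 1) := by
  induction n with
  | zero => simp
  | succ n ih =>
    rw [List.range_succ, List.map_append, List.flatten_append, List.length_append,
      Nat.fib_add_two]
    have h2 : ((([n] : List ℕ).map Nlist).flatten).length = Nat.fib n := by
      simp [(NlistMain n).1]
    rw [h2]
    omega

private lemma fib_ge (n : ℕ) : n ≤ Nat.fib (n + 1) := by
  induction n with
  | zero => simp
  | succ n ih =>
    rw [Nat.fib_add_two]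
    rcases Nat.eq_zero_or_pos n with h | h
    · subst h; simp
    · have := Nat.fib_pos.mpr h; omega

private lemma gword_block {n j : ℕ} (hn : 1 ≤ n) (hj : j < Nat.fib n) :
    Gword (Nat.fib (n + 1) + j) = (Nlist n).getD j [] := by
  have hfib1 : 1 ≤ Nat.fib (n + 1) := Nat.fib_pos.mpr (by omega)
  set i := Nat.fib (n + 1) + j with hi
  have hin : n + 1 ≤ i + 2 := by have := fib_ge n; omega
  obtain ⟨k, hk⟩ : ∃ k, i + 2 = n + (k + 1) := ⟨i + 1 - n, by omega⟩
  have hlen : (((List.range n).map Nlist).flatten).length = Nat.fib (n + 1) - 1 := by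
    have := flatten_len n; omega
  rw [Gword, hk, List.range_add, List.map_append, List.flatten_append,
    List.range_succ_eq_map, List.map_cons, List.map_cons, List.flatten_cons,
    List.getD_append_right _ _ _ _ (by omega), hlen]
  have hidx : i - 1 - (Nat.fib (n + 1) - 1) = j := by omega
  rw [hidx, Nat.add_zero,
    List.getD_append _ _ _ _ (by rw [(NlistMain n).1]; omega)]

private lemma block_of (i : ℕ) (hi : 1 ≤ i) :
    ∃ m, 1 ≤ m ∧ Nat.fib (m + 1) ≤ i ∧ i < Nat.fib (m + 2) := by
  induction i with
  | zero => omega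
  | succ i ih =>
    rcases Nat.eq_zero_or_pos i with h | h
    · subst h
      exact ⟨1, le_refl 1, by decide, by decide⟩
    · obtain ⟨m, hm1, hm2, hm3⟩ := ih h
      rcases lt_or_ge (i + 1) (Nat.fib (m + 2)) with h' | h'
      · exact ⟨m, hm1, by omega, h'⟩
      · refine ⟨m + 1, by omega, ?_, ?_⟩
        · show Nat.fib (m + 2) ≤ i + 1
          omega
        · show i + 1 < Nat.fib (m + 3)
          have hf : Nat.fib (m + 3) = Nat.fib (m + 1) + Nat.fib (m + 2) :=
            Nat.fib_add_two (n := m + 1)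
          have hpos := Nat.fib_pos.mpr (show 0 < m + 1 by omega)
          omega

/-- The list `G = (g_1, g_2, …)` contains every nonzero ZF-word
(written without leading `0`s, i.e. with leftmost digit `1`) exactly once; more
precisely, for every `n ≥ 1` the block `N_n = (g_{F (n+1)}, …, g_{F (n+2) - 1})` has
`F n` entries, all of which are ZF-words of length `n` whose leftmost digit is `1`,
and every ZF-word of length `n` with leftmost digit `1` occurs exactly once in `N_n`. -/
theorem grayCode_blocks_list_ZFwords :
    (∀ w : List Bool, ZFword w → w.head? = some true →
      ∃! i : ℕ, 1 ≤ i ∧ Gword i = w) ∧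
    ∀ n : ℕ, 1 ≤ n →
      (Nlist n).length = Nat.fib n ∧
      (∀ j, j < Nat.fib n → Gword (Nat.fib (n + 1) + j) = (Nlist n).getD j []) ∧
      (∀ w ∈ Nlist n, w.length = n ∧ ZFword w ∧ w.head? = some true) ∧
      (∀ w : List Bool, w.length = n → ZFword w → w.head? = some true →
        (Nlist n).count w = 1) := by
  constructor
  · intro w hz hh
    have hn : 1 ≤ w.length := by
      cases w
      · simp at hh
      · simp
    obtain ⟨hlen, hnd, hmem⟩ := NlistMain w.length
    have hw : w ∈ Nlist w.length := (hmem w).2 ⟨rfl, hz, hh⟩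
    obtain ⟨j, hjlt, hjget⟩ := List.getElem_of_mem hw
    have hjfib : j < Nat.fib w.length := hlen ▸ hjlt
    refine ⟨Nat.fib (w.length + 1) + j, ⟨?_, ?_⟩, ?_⟩
    · have := Nat.fib_pos.mpr (show 0 < w.length + 1 by omega); omega
    · rw [gword_block hn hjfib, List.getD_eq_getElem _ _ hjlt, hjget]
    · rintro i' ⟨hi', hGi'⟩
      obtain ⟨m, hm1, hm2, hm3⟩ := block_of i' hi'
      obtain ⟨hlenm, hndm, hmemm⟩ := NlistMain m
      have hj' : i' - Nat.fib (m + 1) < Nat.fib m := by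
        rw [Nat.fib_add_two] at hm3; omega
      have hGm : Gword i' = (Nlist m).getD (i' - Nat.fib (m + 1)) [] := by
        have := gword_block hm1 hj'
        rwa [Nat.add_sub_cancel' hm2] at this
      rw [hGi'] at hGm
      have hj'' : i' - Nat.fib (m + 1) < (Nlist m).length := by rw [hlenm]; exact hj'
      rw [List.getD_eq_getElem _ _ hj''] at hGm
      have hwm : w ∈ Nlist m := hGm ▸ List.getElem_mem hj''
      have hm_eq : m = w.length := by
        have := ((hmemm w).1 hwm).1; omega
      subst hm_eq
      have heq : (Nlist w.length)[i' - Nat.fib (w.length + 1)]'hj''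
          = (Nlist w.length)[j]'hjlt := by
        rw [hjget]; exact hGm.symm
      have := (hnd.getElem_inj_iff).mp heq
      omega
  · intro n hn
    obtain ⟨hlen, hnd, hmem⟩ := NlistMain n
    refine ⟨hlen, fun j hj => gword_block hn hj, fun w hw => (hmem w).1 hw,
      fun w h1 h2 h3 => ?_⟩
    have hc := List.count_eq_one_of_mem hnd ((hmem w).2 ⟨h1, h2, h3⟩)
    exact hc
end

section
/- For every n ≥ 1, the Hamming distance h(g_n, g_{n+1}) equals 2 if n + 1 = F_k for some k ≥ 3, and equals 1 otherwise. -/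
lemma ham_comm (w w' : List Bool) : hammingWords w w' = hammingWords w' w := by
  unfold hammingWords
  rw [max_comm]
  congr 1
  apply Finset.filter_congr
  intro i _
  constructor <;> exact Ne.symm
lemma ham_self (w : List Bool) : hammingWords w w = 0 := by
  simp [hammingWords]
lemma getD_singleton (a : Bool) (k : ℕ) : ([a] : List Bool).getD k false = if k = 0 then a else false := by
  cases k <;> simp
lemma pad_getD (w : List Bool) (i : ℕ) :
    (false :: w).reverse.getD i false = w.reverse.getD i false := by
  rcases lt_or_ge i w.length with h | h
  · rw [List.reverse_cons, List.getD_append _ _ _ _ (by simpa using h)]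
  · have h1 : w.reverse.getD i false = false := List.getD_eq_default _ _ (by simpa using h)
    have h2 : (w.reverse ++ [false]).getD i false = false := by
      rw [List.getD_append_right _ _ _ _ (by simpa using h), getD_singleton]
      simp
    rw [List.reverse_cons, h1, h2]
lemma ham_pad (w w' : List Bool) : hammingWords (false :: w) w' = hammingWords w w' := by
  unfold hammingWords
  rcases le_or_gt w'.length (w.length) with h | h
  · have h1 : max (false :: w).length w'.length = w.length + 1 := by simp; omega
    have h2 : max w.length w'.length = w.length := by omega
    rw [h1, h2, Finset.range_add_one, Finset.filter_insert]
    have hc : ¬ ((false :: w).reverse.getD w.length false ≠ w'.reverse.getD w.length false) := by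
      rw [pad_getD, List.getD_eq_default _ _ (by simp),
        List.getD_eq_default _ _ (by simpa using h)]
      simp
    rw [if_neg hc]
    congr 1
    apply Finset.filter_congr
    intro i _; rw [pad_getD]
  · have h1 : max (false :: w).length w'.length = w'.length := by simp; omega
    have h2 : max w.length w'.length = w'.length := by omega
    rw [h1, h2]
    congr 1
    apply Finset.filter_congr
    intro i _; rw [pad_getD]
lemma cons_rev_getD (a : Bool) (w : List Bool) (i : ℕ) :
    (a :: w).reverse.getD i false = if i = w.length then a else w.reverse.getD i false := by
  rcases lt_trichotomy i w.length with h | h | h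
  · rw [List.reverse_cons, List.getD_append _ _ _ _ (by simpa using h), if_neg (by omega)]
  · subst h
    rw [List.reverse_cons, List.getD_append_right _ _ _ _ (by simp), if_pos rfl]
    simp
  · have h1 : w.reverse.getD i false = false := List.getD_eq_default _ _ (by simp; omega)
    have h2 : (w.reverse ++ [a]).getD i false = false := by
      rw [List.getD_append_right _ _ _ _ (by simp; omega), getD_singleton, if_neg (by simp; omega)]
    rw [List.reverse_cons, h1, h2, if_neg (by omega)]
lemma ham_cons (a b : Bool) (w w' : List Bool) (h : w.length = w'.length) :
    hammingWords (a :: w) (b :: w') = hammingWords w w' + (if a = b then 0 else 1) := by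
  unfold hammingWords
  have h1 : max (a :: w).length (b :: w').length = w.length + 1 := by simp; omega
  have h2 : max w.length w'.length = w.length := by omega
  rw [h1, h2, Finset.range_add_one, Finset.filter_insert]
  have hfe : Finset.filter
      (fun i => (a :: w).reverse.getD i false ≠ (b :: w').reverse.getD i false)
      (Finset.range w.length) = Finset.filter
      (fun i => w.reverse.getD i false ≠ w'.reverse.getD i false) (Finset.range w.length) := by
    apply Finset.filter_congr
    intro i hi
    simp only [Finset.mem_range] at hi
    rw [cons_rev_getD, cons_rev_getD, if_neg (by omega), if_neg (by omega)]
  have htop : ((a :: w).reverse.getD w.length false ≠ (b :: w').reverse.getD w.length false)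
      ↔ ¬ (a = b) := by
    rw [cons_rev_getD, cons_rev_getD, if_pos rfl, if_pos h]
  rcases eq_or_ne a b with hab | hab
  · rw [if_neg (htop.not_left.mpr (by simpa using hab)), hfe, if_pos hab]
    simp
  · rw [if_pos (htop.mpr hab), if_neg hab, hfe,
      Finset.card_insert_of_notMem (by simp)]
lemma ham_cons_same (a : Bool) (w w' : List Bool) (h : w.length = w'.length) :
    hammingWords (a :: w) (a :: w') = hammingWords w w' := by
  rw [ham_cons a a w w' h]; simp
lemma ham_cons_ne (a b : Bool) (w w' : List Bool) (h : w.length = w'.length) (hab : a ≠ b) :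
    hammingWords (a :: w) (b :: w') = hammingWords w w' + 1 := by
  rw [ham_cons a b w w' h]; simp [hab]
lemma length_Nlist : ∀ n, (Nlist n).length = Nat.fib n
  | 0 => rfl
  | 1 => rfl
  | (n+2) => by
      simp [Nlist, length_Nlist (n+1), length_Nlist n, Nat.fib_add_two, Nat.add_comm]
lemma Nlist_ne_nil {n : ℕ} (hn : 1 ≤ n) : Nlist n ≠ [] := by
  intro h
  have hl := length_Nlist n
  rw [h] at hl
  simp at hl
  have := Nat.fib_pos.mpr hn
  omega
lemma mem_Nlist_length : ∀ n, ∀ w ∈ Nlist n, w.length = n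
  | 0 => by simp [Nlist]
  | 1 => by simp [Nlist]
  | (n+2) => by
      intro w hw
      simp only [Nlist, List.mem_append, List.mem_map, List.mem_reverse] at hw
      rcases hw with ⟨v, hv, rfl⟩ | ⟨v, hv, rfl⟩
      · rcases hv with ⟨u, hu, rfl⟩
        have h1 := mem_Nlist_length (n+1) u hu
        have : u.tail.length = n := by simp [h1]
        simp [this]
      · have h1 := mem_Nlist_length n v hv
        simp [h1]
lemma mem_Nlist_head : ∀ n, 1 ≤ n → ∀ w ∈ Nlist n, ∃ v, w = true :: v
  | 0 => by omega
  | 1 => by simp [Nlist]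
  | (n+2) => by
      intro _ w hw
      simp only [Nlist, List.mem_append, List.mem_map, List.mem_reverse] at hw
      rcases hw with ⟨v, hv, rfl⟩ | ⟨v, hv, rfl⟩ <;> exact ⟨_, rfl⟩
def Fw (n : ℕ) : List Bool := ((Nlist n).head?).getD []
def Lw (n : ℕ) : List Bool := ((Nlist n).getLast?).getD []
lemma head?_some {α : Type*} (l : List α) (d : α) (h : l ≠ []) :
    l.head? = some (l.head?.getD d) := by
  cases l with
  | nil => exact absurd rfl h
  | cons a l => rfl
lemma getLast?_some {α : Type*} (l : List α) (d : α) (h : l ≠ []) :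
    l.getLast? = some (l.getLast?.getD d) := by
  obtain ⟨a, ha⟩ := Option.isSome_iff_exists.mp (List.getLast?_isSome.mpr h)
  rw [ha]; rfl
lemma Lw_mem {n : ℕ} (hn : 1 ≤ n) : Lw n ∈ Nlist n := by
  have h := getLast?_some (Nlist n) [] (Nlist_ne_nil hn)
  exact List.mem_of_mem_getLast? (by rw [h]; rfl)
lemma Fw_mem {n : ℕ} (hn : 1 ≤ n) : Fw n ∈ Nlist n := by
  have h := head?_some (Nlist n) [] (Nlist_ne_nil hn)
  exact List.mem_of_mem_head? (by rw [h]; rfl)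
lemma Nlist_def (n : ℕ) : Nlist (n+2) =
    ((Nlist (n + 1)).map List.tail).reverse.map (fun w => true :: false :: w) ++
      (Nlist n).reverse.map (fun w => true :: false :: w) := by
  simp only [Nlist]
lemma head?_Nlist {n : ℕ} (hn : 1 ≤ n) : (Nlist n).head? = some (Fw n) :=
  head?_some _ [] (Nlist_ne_nil hn)
lemma getLast?_Nlist {n : ℕ} (hn : 1 ≤ n) : (Nlist n).getLast? = some (Lw n) :=
  getLast?_some _ [] (Nlist_ne_nil hn)
lemma Fw_succ (n : ℕ) : Fw (n+2) = true :: false :: (Lw (n+1)).tail := by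
  unfold Fw
  rw [Nlist_def, List.head?_append, List.head?_map, List.head?_reverse, List.getLast?_map,
    getLast?_Nlist (by omega)]
  rfl
lemma Fw_succ' {n : ℕ} (hn : 1 ≤ n) : Fw (n+1) = true :: false :: (Lw n).tail := by
  obtain ⟨m, rfl⟩ : ∃ m, n = m + 1 := ⟨n - 1, by omega⟩
  exact Fw_succ m
lemma Lw_succ {n : ℕ} (hn : 1 ≤ n) : Lw (n+2) = true :: false :: Fw n := by
  unfold Lw
  rw [Nlist_def, List.getLast?_append, List.getLast?_map, List.getLast?_reverse,
    head?_Nlist hn]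
  rfl
lemma Lw_shape {n : ℕ} (hn : 1 ≤ n) : Lw n = true :: (Lw n).tail := by
  obtain ⟨v, hv⟩ := mem_Nlist_head n hn _ (Lw_mem hn)
  rw [hv]; rfl
lemma Lw_length {n : ℕ} (hn : 1 ≤ n) : (Lw n).length = n :=
  mem_Nlist_length n _ (Lw_mem hn)
lemma chain'_imp_mem {α : Type*} {R S : α → α → Prop} {l : List α}
    (h : List.Chain' R l) (H : ∀ a ∈ l, ∀ b ∈ l, R a b → S a b) : List.Chain' S l := by
  simp only [List.Chain'] at h ⊢
  rw [List.isChain_iff_getElem] at h ⊢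
  intro i hi
  exact H _ (List.getElem_mem _) _ (List.getElem_mem _) (h i hi)
lemma chain_Nlist : ∀ n, List.Chain' (fun w w' => hammingWords w w' = 1) (Nlist n)
  | 0 => by simp [Nlist, List.Chain']
  | 1 => by simp [Nlist, List.Chain']
  | (n+2) => by
      have IH1 := chain_Nlist (n+1)
      have IH0 := chain_Nlist n
      rw [Nlist_def]; simp only [List.Chain']; rw [List.isChain_append]
      refine ⟨?_, ?_, ?_⟩
      · rw [List.isChain_map, List.isChain_reverse, List.isChain_map]
        apply chain'_imp_mem IH1
        intro w hw w' hw' hww'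
        obtain ⟨v, rfl⟩ := mem_Nlist_head (n+1) (by omega) w hw
        obtain ⟨v', rfl⟩ := mem_Nlist_head (n+1) (by omega) w' hw'
        have hl : v.length = n := by have := mem_Nlist_length (n+1) _ hw; simpa using this
        have hl' : v'.length = n := by have := mem_Nlist_length (n+1) _ hw'; simpa using this
        have hvv' : hammingWords v v' = 1 := by
          rwa [ham_cons_same _ _ _ (by omega)] at hww'
        show hammingWords (true :: false :: v') (true :: false :: v) = 1
        rw [ham_cons_same _ _ _ (by simp; omega), ham_cons_same _ _ _ (by omega), ham_comm]
        exact hvv'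
      · rw [List.isChain_map, List.isChain_reverse]
        apply chain'_imp_mem IH0
        intro w hw w' hw' hww'
        have hl : w.length = n := mem_Nlist_length n _ hw
        have hl' : w'.length = n := mem_Nlist_length n _ hw'
        show hammingWords (true :: false :: w') (true :: false :: w) = 1
        rw [ham_cons_same _ _ _ (by simp; omega), ham_cons_same _ _ _ (by omega),
          ham_comm]
        exact hww'
      · rcases Nat.eq_zero_or_pos n with rfl | hn
        · intro x _ y hy
          simp [Nlist] at hy
        · rw [List.getLast?_map, List.getLast?_reverse, List.head?_map, head?_Nlist (by omega),
            List.head?_map, List.head?_reverse, getLast?_Nlist hn]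
          intro x hx y hy
          simp only [Option.mem_def, Option.map_some, Option.some.injEq] at hx hy
          subst hx; subst hy
          rw [Fw_succ' (by omega : 1 ≤ n)]
          show hammingWords (true :: false :: (false :: (Lw n).tail))
            (true :: false :: Lw n) = 1
          rw [Lw_shape hn]
          have ht : (Lw n).tail.length = (Lw n).tail.length := rfl
          rw [ham_cons_same _ _ _ (by simp), ham_cons_same _ _ _ (by simp)]
          simp only [List.tail_cons]
          rw [ham_cons_ne _ _ _ _ rfl (by simp), ham_self]
def Llist (M : ℕ) : List (List Bool) := ((List.range M).map Nlist).flatten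
lemma Llist_succ (M : ℕ) : Llist (M+1) = Llist M ++ Nlist M := by
  unfold Llist
  rw [List.range_succ]
  simp
lemma length_Llist : ∀ M, (Llist M).length = Nat.fib (M+1) - 1
  | 0 => rfl
  | (M+1) => by
    rw [Llist_succ, List.length_append, length_Llist M, length_Nlist]
    have h1 : 1 ≤ Nat.fib (M+1) := Nat.fib_pos.mpr (by omega)
    have h2 : Nat.fib (M+2) = Nat.fib M + Nat.fib (M+1) := Nat.fib_add_two
    have h3 : Nat.fib (M+1+1) = Nat.fib (M+2) := rfl
    omega
lemma fib_succ_ge : ∀ m : ℕ, m ≤ Nat.fib (m+1)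
  | 0 => by simp
  | 1 => by simp
  | (m+2) => by
    have h1 := fib_succ_ge (m+1)
    have h2 : 1 ≤ Nat.fib (m+1) := Nat.fib_pos.mpr (by omega)
    have h3 : Nat.fib (m+3) = Nat.fib (m+1) + Nat.fib (m+2) := Nat.fib_add_two
    have h4 : Nat.fib (m+2+1) = Nat.fib (m+3) := rfl
    have h5 : Nat.fib (m+1+1) = Nat.fib (m+2) := rfl
    omega
lemma getD_Llist_stable (m : ℕ) : ∀ M, m ≤ M → ∀ i, i < Nat.fib (m+1) - 1 →
    (Llist M).getD i [] = (Llist m).getD i [] := by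
  intro M hM
  induction M, hM using Nat.le_induction with
  | base => intro i _; rfl
  | succ M hM ih =>
    intro i hi
    have hlen : i < (Llist M).length := by
      rw [length_Llist]
      have := Nat.fib_mono (show m+1 ≤ M+1 by omega)
      omega
    rw [Llist_succ, List.getD_append _ _ _ _ hlen, ih i hi]
lemma Gword_eq {m i : ℕ} (hm : 1 ≤ m) (h1 : Nat.fib (m+1) ≤ i) (h2 : i < Nat.fib (m+2)) :
    Gword i = (Nlist m).getD (i - Nat.fib (m+1)) [] := by
  have hfib1 : 1 ≤ Nat.fib (m+1) := Nat.fib_pos.mpr (by omega)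
  have him : m ≤ i := le_trans (fib_succ_ge m) h1
  show (Llist (i+2)).getD (i-1) [] = _
  rw [getD_Llist_stable (m+1) (i+2) (by omega) (i-1)
      (by have : Nat.fib (m+1+1) = Nat.fib (m+2) := rfl; omega),
    Llist_succ, List.getD_append_right _ _ _ _ (by rw [length_Llist]; omega),
    length_Llist]
  congr 1
  omega
lemma exists_block (n : ℕ) (hn : 1 ≤ n) :
    ∃ m, 1 ≤ m ∧ Nat.fib (m+1) ≤ n ∧ n < Nat.fib (m+2) := by
  induction n with
  | zero => omega
  | succ n ih =>
    rcases Nat.eq_zero_or_pos n with rfl | hp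
    · exact ⟨1, le_refl 1, by simp, by simp [Nat.fib]⟩
    · obtain ⟨m, hm1, hm2, hm3⟩ := ih hp
      by_cases h : n + 1 < Nat.fib (m+2)
      · exact ⟨m, hm1, by omega, h⟩
      · have heq : n + 1 = Nat.fib (m+2) := by omega
        have h3 : Nat.fib (m+3) = Nat.fib (m+1) + Nat.fib (m+2) := Nat.fib_add_two
        have hfib1 : 1 ≤ Nat.fib (m+1) := Nat.fib_pos.mpr (by omega)
        have h4 : Nat.fib (m+1+1) = Nat.fib (m+2) := rfl
        have h5 : Nat.fib (m+1+2) = Nat.fib (m+3) := rfl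
        exact ⟨m+1, by omega, by omega, by omega⟩
lemma chain_pair {m j : ℕ} (hj : j + 1 < Nat.fib m) :
    hammingWords ((Nlist m).getD j []) ((Nlist m).getD (j+1) []) = 1 := by
  have hlen : (Nlist m).length = Nat.fib m := length_Nlist m
  have hc := (List.isChain_iff_getElem.mp (chain_Nlist m)) j (by omega)
  have e1 : (Nlist m).getD j [] = (Nlist m).get ⟨j, by omega⟩ := by
    rw [List.getD_eq_getElem?_getD, List.getElem?_eq_getElem (by omega)]
    rfl
  have e2 : (Nlist m).getD (j+1) [] = (Nlist m).get ⟨j+1, by omega⟩ := by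
    rw [List.getD_eq_getElem?_getD, List.getElem?_eq_getElem (by omega)]
    rfl
  rw [e1, e2]
  exact hc
lemma getD_last {m : ℕ} (hm : 1 ≤ m) : (Nlist m).getD (Nat.fib m - 1) [] = Lw m := by
  rw [List.getD_eq_getElem?_getD, ← length_Nlist, ← List.getLast?_eq_getElem?]
  rfl
lemma getD_head {m : ℕ} : (Nlist m).getD 0 [] = Fw m := by
  rw [List.getD_eq_getElem?_getD, ← List.head?_eq_getElem?]
  rfl
lemma boundary_ham {m : ℕ} (hm : 1 ≤ m) : hammingWords (Lw m) (Fw (m+1)) = 2 := by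
  rw [Fw_succ' hm]
  conv_lhs => rw [Lw_shape hm, ← ham_pad]
  rw [ham_cons_ne _ _ _ _ (by simp) (by simp)]
  simp only [List.tail_cons]
  rw [ham_cons_ne _ _ _ _ rfl (by simp), ham_self]

/-- For every `n ≥ 1`, the Hamming distance `h(g_n, g_{n+1})` equals
`2` if `n + 1 = F k` for some `k ≥ 3`, and equals `1` otherwise. -/
theorem grayCode_hamming_distance (n : ℕ) (hn : 1 ≤ n) :
    ((∃ k, 3 ≤ k ∧ n + 1 = Nat.fib k) → hammingWords (Gword n) (Gword (n + 1)) = 2) ∧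
    ((¬∃ k, 3 ≤ k ∧ n + 1 = Nat.fib k) → hammingWords (Gword n) (Gword (n + 1)) = 1) := by
  obtain ⟨m, hm1, hm2, hm3⟩ := exists_block n hn
  have hfib1 : 1 ≤ Nat.fib (m+1) := Nat.fib_pos.mpr (by omega)
  have hfib2 : Nat.fib (m+2) = Nat.fib m + Nat.fib (m+1) := Nat.fib_add_two
  have hfibm : 1 ≤ Nat.fib m := Nat.fib_pos.mpr (by omega)
  by_cases h : n + 1 < Nat.fib (m+2)
  · -- interior
    have hG1 : Gword n = (Nlist m).getD (n - Nat.fib (m+1)) [] := Gword_eq hm1 hm2 (by omega)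
    have hG2 : Gword (n+1) = (Nlist m).getD (n + 1 - Nat.fib (m+1)) [] :=
      Gword_eq hm1 (by omega) h
    have hj : n + 1 - Nat.fib (m+1) = (n - Nat.fib (m+1)) + 1 := by omega
    have hham : hammingWords (Gword n) (Gword (n+1)) = 1 := by
      rw [hG1, hG2, hj]
      exact chain_pair (by omega)
    constructor
    · rintro ⟨k, hk3, hkeq⟩
      exfalso
      rcases le_or_gt k (m+1) with hk | hk
      · have := Nat.fib_mono hk
        omega
      · have := Nat.fib_mono (show m+2 ≤ k by omega)
        omega
    · intro _; exact hham
  · -- boundary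
    have heq : n + 1 = Nat.fib (m+2) := by omega
    have hfib3 : Nat.fib (m+3) = Nat.fib (m+1) + Nat.fib (m+2) := Nat.fib_add_two
    have e1 : Nat.fib (m+1+1) = Nat.fib (m+2) := rfl
    have e2 : Nat.fib (m+1+2) = Nat.fib (m+3) := rfl
    have hG1 : Gword n = (Nlist m).getD (n - Nat.fib (m+1)) [] := Gword_eq hm1 hm2 (by omega)
    have hG2 : Gword (n+1) = (Nlist (m+1)).getD (n + 1 - Nat.fib (m+2)) [] :=
      Gword_eq (by omega) (by omega) (by omega)
    have hham : hammingWords (Gword n) (Gword (n+1)) = 2 := by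
      rw [hG1, hG2, show n - Nat.fib (m+1) = Nat.fib m - 1 by omega,
        show n + 1 - Nat.fib (m+2) = 0 by omega, getD_last hm1, getD_head]
      exact boundary_ham hm1
    constructor
    · intro _; exact hham
    · intro hno
      exact absurd ⟨m+2, by omega, heq⟩ hno
end
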